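/- arXiv:2003.05360 — 6 statements merged into one kernel-verified Lean document; each statement's English description precedes it below -/
import Mathlib

section
/- Let α : [1,∞) → (0,∞) be Borel measurable. Then the following two conditions are equivalent: (i) there exist numbers b > 1 and c ≥ 1 such that c⁻¹ ≤ α(λt)/α(t) ≤ c for all t ≥ 1 and all λ ∈ [1,b]; (ii) there exist real numbers r₀ ≤ r₁ and positive numbers c₀, c₁ such that c₀·λ^{r₀} ≤ α(λt)/α(t) ≤ c₁·λ^{r₁} for all t ≥ 1 and all λ ≥ 1. -/
/-- For a Borel measurable `α : [1,∞) → (0,∞)`, the defining condition of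
the class OR (condition (i)) is equivalent to the two-sided power bound condition (ii). -/
theorem stmt_0 (α : ℝ → ℝ)
    (hmeas : Measurable ((Set.Ici (1:ℝ)).restrict α))
    (hpos : ∀ t, 1 ≤ t → 0 < α t) :
    (∃ b : ℝ, 1 < b ∧ ∃ c : ℝ, 1 ≤ c ∧ ∀ t, 1 ≤ t → ∀ l, 1 ≤ l → l ≤ b →
        c⁻¹ ≤ α (l * t) / α t ∧ α (l * t) / α t ≤ c) ↔
    (∃ r₀ r₁ : ℝ, r₀ ≤ r₁ ∧ ∃ c₀ : ℝ, 0 < c₀ ∧ ∃ c₁ : ℝ, 0 < c₁ ∧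
        ∀ t, 1 ≤ t → ∀ l, 1 ≤ l →
          c₀ * l ^ r₀ ≤ α (l * t) / α t ∧ α (l * t) / α t ≤ c₁ * l ^ r₁) := by
  constructor
  · rintro ⟨b, hb, c, hc, H⟩
    have hb0 : (0:ℝ) < b := lt_trans one_pos hb
    have hlogb : 0 < Real.log b := Real.log_pos hb
    have hc0 : (0:ℝ) < c := lt_of_lt_of_le one_pos hc
    have hcinv1 : c⁻¹ ≤ 1 := inv_le_one_of_one_le₀ hc
    have hcinv0 : (0:ℝ) < c⁻¹ := inv_pos.mpr hc0
    have key : ∀ n : ℕ, ∀ t, 1 ≤ t → ∀ l, 1 ≤ l → l ≤ b ^ (n+1) →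
        (c⁻¹)^(n+1) ≤ α (l*t)/α t ∧ α (l*t)/α t ≤ c^(n+1) := by
      intro n
      induction n with
      | zero =>
        intro t ht l hl hlb
        simpa using H t ht l hl (by simpa using hlb)
      | succ n ih =>
        intro t ht l hl hlb
        by_cases hcase : l ≤ b ^ (n+1)
        · obtain ⟨h1, h2⟩ := ih t ht l hl hcase
          constructor
          · refine le_trans ?_ h1
            exact pow_le_pow_of_le_one hcinv0.le hcinv1 (by omega)
          · exact h2.trans (pow_le_pow_right₀ hc (by omega))
        · push_neg at hcase
          have hlb1 : 1 ≤ l / b := by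
            rw [le_div_iff₀ hb0]
            calc (1:ℝ) * b = b ^ 1 := by ring
            _ ≤ b ^ (n+1) := pow_le_pow_right₀ hb.le (by omega)
            _ ≤ l := hcase.le
          have hdiv : l / b ≤ b ^ (n+1) := by
            rw [div_le_iff₀ hb0]
            calc l ≤ b ^ (n+1+1) := hlb
            _ = b ^ (n+1) * b := by ring
          obtain ⟨h1, h2⟩ := ih t ht (l/b) hlb1 hdiv
          have ht' : 1 ≤ l / b * t := one_le_mul_of_one_le_of_one_le hlb1 ht
          obtain ⟨g1, g2⟩ := H (l/b*t) ht' b hb.le le_rfl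
          have hαt : 0 < α t := hpos t ht
          have hαt' : 0 < α (l/b*t) := hpos _ ht'
          have hrw : b * (l/b*t) = l * t := by field_simp
          have hprod : α (l*t)/α t = (α (b*(l/b*t))/α (l/b*t)) * (α (l/b*t)/α t) := by
            rw [hrw, div_mul_div_cancel₀ (ne_of_gt hαt')]
          constructor
          · rw [hprod, pow_succ]
            calc (c⁻¹)^(n+1) * c⁻¹ ≤ (α (l/b*t)/α t) * (α (b*(l/b*t))/α (l/b*t)) := by
                  apply mul_le_mul h1 g1 hcinv0.le
                  positivity
              _ = (α (b*(l/b*t))/α (l/b*t)) * (α (l/b*t)/α t) := by ring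
          · rw [hprod, pow_succ]
            calc (α (b*(l/b*t))/α (l/b*t)) * (α (l/b*t)/α t)
                ≤ c * c^(n+1) := by
                  apply mul_le_mul g2 h2 (by positivity) hc0.le
              _ = c^(n+1) * c := by ring
    refine ⟨-(Real.log c / Real.log b), Real.log c / Real.log b, ?_, c⁻¹, hcinv0, c, hc0, ?_⟩
    · have : 0 ≤ Real.log c / Real.log b := div_nonneg (Real.log_nonneg hc) hlogb.le
      linarith
    · intro t ht l hl
      have hl0 : (0:ℝ) < l := lt_of_lt_of_le one_pos hl
      set n : ℕ := ⌊Real.logb b l⌋₊ with hn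
      have hlogbl : 0 ≤ Real.logb b l := Real.logb_nonneg hb hl
      have hfl : (n:ℝ) ≤ Real.logb b l := Nat.floor_le hlogbl
      have hfl2 : Real.logb b l < n + 1 := Nat.lt_floor_add_one _
      have hlbn : l ≤ b ^ (n+1) := by
        have : l = b ^ Real.logb b l := (Real.rpow_logb hb0 (ne_of_gt hb) hl0).symm
        rw [this]
        calc b ^ Real.logb b l ≤ b ^ ((n:ℝ)+1) :=
              Real.rpow_le_rpow_of_exponent_le hb.le hfl2.le
          _ = b ^ (n+1) := by
              rw [show ((n:ℝ)+1) = ((n+1 : ℕ) : ℝ) by push_cast; ring, Real.rpow_natCast]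
      obtain ⟨h1, h2⟩ := key n t ht l hl hlbn
      have hcup : c ^ Real.logb b l = l ^ (Real.log c / Real.log b) := by
        rw [Real.rpow_def_of_pos hc0, Real.rpow_def_of_pos hl0, Real.logb]
        congr 1
        ring
      have hcdown : (c⁻¹) ^ Real.logb b l = l ^ (-(Real.log c / Real.log b)) := by
        rw [Real.rpow_def_of_pos hcinv0, Real.rpow_def_of_pos hl0, Real.logb, Real.log_inv]
        congr 1
        ring
      constructor
      · calc c⁻¹ * l ^ (-(Real.log c / Real.log b)) = c⁻¹ * (c⁻¹) ^ Real.logb b l := by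
              rw [hcdown]
          _ ≤ c⁻¹ * (c⁻¹) ^ (n:ℝ) := by
              apply mul_le_mul_of_nonneg_left _ hcinv0.le
              exact Real.rpow_le_rpow_of_exponent_ge hcinv0 hcinv1 hfl
          _ = (c⁻¹)^(n+1) := by
              rw [Real.rpow_natCast, pow_succ]; ring
          _ ≤ α (l*t)/α t := h1
      · calc α (l*t)/α t ≤ c^(n+1) := h2
          _ = c * c ^ (n:ℝ) := by rw [Real.rpow_natCast, pow_succ]; ring
          _ ≤ c * c ^ Real.logb b l := by
              apply mul_le_mul_of_nonneg_left _ hc0.le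
              exact Real.rpow_le_rpow_of_exponent_le hc hfl
          _ = c * l ^ (Real.log c / Real.log b) := by rw [hcup]
  · rintro ⟨r₀, r₁, hr, c₀, hc₀, c₁, hc₁, H⟩
    have h11 := H 1 le_rfl 1 le_rfl
    simp at h11
    have hratio1 : α 1 / α 1 = 1 := div_self (ne_of_gt (hpos 1 le_rfl))
    rw [hratio1] at h11  -- c₀ ≤ 1 ∧ 1 ≤ c₁
    set c : ℝ := max (c₁ * 2 ^ |r₁|) (c₀⁻¹ * 2 ^ |r₀|) with hcdef
    have hc1 : 1 ≤ c := by
      have : (1:ℝ) ≤ c₁ * 2 ^ |r₁| := by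
        have h2 : (1:ℝ) ≤ 2 ^ |r₁| := Real.one_le_rpow one_le_two (abs_nonneg _)
        nlinarith [h11.2]
      exact le_trans this (le_max_left _ _)
    refine ⟨2, one_lt_two, c, hc1, ?_⟩
    intro t ht l hl hl2
    have hl0 : (0:ℝ) < l := lt_of_lt_of_le one_pos hl
    obtain ⟨h1, h2⟩ := H t ht l hl
    have hup : l ^ r₁ ≤ 2 ^ |r₁| := by
      rcases le_or_gt 0 r₁ with h | h
      · calc l ^ r₁ ≤ 2 ^ r₁ := Real.rpow_le_rpow hl0.le hl2 h
          _ ≤ 2 ^ |r₁| := Real.rpow_le_rpow_of_exponent_le one_le_two (le_abs_self _)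
      · calc l ^ r₁ ≤ 1 := Real.rpow_le_one_of_one_le_of_nonpos hl h.le
          _ ≤ 2 ^ |r₁| := Real.one_le_rpow one_le_two (abs_nonneg _)
    have hdown : (2:ℝ) ^ (-|r₀|) ≤ l ^ r₀ := by
      rcases le_or_gt 0 r₀ with h | h
      · calc (2:ℝ) ^ (-|r₀|) ≤ 1 := Real.rpow_le_one_of_one_le_of_nonpos one_le_two
              (neg_nonpos.mpr (abs_nonneg _))
          _ ≤ l ^ r₀ := Real.one_le_rpow hl h
      · have : -|r₀| = r₀ := by rw [abs_of_neg h]; ring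
        rw [this]
        exact Real.rpow_le_rpow_of_nonpos hl0 hl2 h.le
    constructor
    · have step1 : c⁻¹ ≤ c₀ * 2 ^ (-|r₀|) := by
        have hpos2 : (0:ℝ) < c₀⁻¹ * 2 ^ |r₀| := by positivity
        have : c₀ * 2 ^ (-|r₀|) = (c₀⁻¹ * 2 ^ |r₀|)⁻¹ := by
          rw [mul_inv, inv_inv, ← Real.rpow_neg (by norm_num)]
        rw [this]
        exact inv_anti₀ hpos2 (le_max_right _ _)
      calc c⁻¹ ≤ c₀ * 2 ^ (-|r₀|) := step1
        _ ≤ c₀ * l ^ r₀ := mul_le_mul_of_nonneg_left hdown hc₀.le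
        _ ≤ α (l*t)/α t := h1
    · calc α (l*t)/α t ≤ c₁ * l ^ r₁ := h2
        _ ≤ c₁ * 2 ^ |r₁| := mul_le_mul_of_nonneg_left hup hc₁.le
        _ ≤ c := le_max_left _ _
end

section
/- A Borel measurable function α : [1,∞) → (0,∞) belongs to the class OR if and only if there exist Borel measurable, bounded, real-valued functions β and γ on [1,∞) such that α(t) = exp( β(t) + ∫₁ᵗ γ(τ)/τ dτ ) for all t ≥ 1. -/
open MeasureTheory intervalIntegral Set

lemma intInt_of_bdd_on {f : ℝ → ℝ} (hf : Measurable f) {M a b : ℝ}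
    (hM : ∀ x ∈ Set.uIcc a b, |f x| ≤ M) :
    IntervalIntegrable f volume a b := by
  constructor <;>
  · apply Measure.integrableOn_of_bounded (M := M) measure_Ioc_lt_top.ne
      hf.aestronglyMeasurable
    filter_upwards [ae_restrict_mem measurableSet_Ioc] with x hx
    rw [Real.norm_eq_abs]
    exact hM x (by
      rcases hx with ⟨h1, h2⟩
      first
      | exact Set.mem_uIcc.2 (Or.inl ⟨le_of_lt h1, h2⟩)
      | exact Set.mem_uIcc.2 (Or.inr ⟨le_of_lt h1, h2⟩))

lemma intInt_of_bdd {f : ℝ → ℝ} (hf : Measurable f) {M : ℝ} (hM : ∀ x, |f x| ≤ M)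
    (a b : ℝ) : IntervalIntegrable f volume a b :=
  intInt_of_bdd_on hf (fun x _ => hM x)

lemma meas_ext {f : ℝ → ℝ} (hf : Measurable ((Set.Ici (1:ℝ)).restrict f)) :
    Measurable (fun t : ℝ => if 1 ≤ t then f t else 0) := by
  classical
  have : Measurable fun t : ℝ =>
      if h : t ∈ Set.Ici (1:ℝ) then ((Set.Ici (1:ℝ)).restrict f) ⟨t, h⟩ else (0:ℝ) :=
    Measurable.dite hf measurable_const measurableSet_Ici
  simpa [Set.restrict] using this

lemma abs_log_le {x C : ℝ} (hC : 1 ≤ C) (h1 : C⁻¹ ≤ x) (h2 : x ≤ C) :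
    |Real.log x| ≤ Real.log C := by
  have hC0 : 0 < C := lt_of_lt_of_le one_pos hC
  have hx0 : 0 < x := lt_of_lt_of_le (by positivity) h1
  rw [abs_le]
  constructor
  · rw [← Real.log_inv]
    exact Real.log_le_log (by positivity) h1
  · exact Real.log_le_log hx0 h2

lemma int_c_div {c a b : ℝ} (ha : 0 < a) (hab : a ≤ b) :
    ∫ σ in a..b, c * (1/σ) = c * Real.log (b/a) := by
  rw [intervalIntegral.integral_const_mul, integral_one_div]
  intro hmem
  rw [Set.uIcc_of_le hab] at hmem
  linarith [hmem.1]

lemma intInt_c_div {c a b : ℝ} (ha : 1 ≤ a) (hb : 1 ≤ b) :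
    IntervalIntegrable (fun τ => c * (1/τ)) volume a b := by
  apply intInt_of_bdd_on (measurable_const.mul (measurable_const.div measurable_id)) (M := |c|)
  intro x hx
  have h1x : 1 ≤ x := by
    rcases Set.mem_uIcc.1 hx with ⟨h, _⟩ | ⟨h, _⟩
    · exact le_trans ha h
    · exact le_trans hb h
  have hx0 : 0 < x := lt_of_lt_of_le one_pos h1x
  show |c * (1 / x)| ≤ |c|
  rw [abs_mul]
  calc |c| * |1/x| ≤ |c| * 1 := by
        apply mul_le_mul_of_nonneg_left _ (abs_nonneg c)
        rw [abs_of_pos (by positivity)]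
        rw [div_le_one hx0]
        exact h1x
  _ = |c| := mul_one _

lemma key_pow {α : ℝ → ℝ} (hpos : ∀ t, 1 ≤ t → 0 < α t) {b c : ℝ} (hb : 1 < b) (hc : 1 ≤ c)
    (H : ∀ t, 1 ≤ t → ∀ l, 1 ≤ l → l ≤ b → c⁻¹ ≤ α (l * t) / α t ∧ α (l * t) / α t ≤ c) :
    ∀ n : ℕ, ∀ t, 1 ≤ t → ∀ l, 1 ≤ l → l ≤ b ^ n →
      (c ^ n)⁻¹ ≤ α (l * t) / α t ∧ α (l * t) / α t ≤ c ^ n := by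
  intro n
  induction n with
  | zero =>
    intro t ht l hl1 hl2
    simp only [pow_zero] at hl2 ⊢
    have : l = 1 := le_antisymm hl2 hl1
    subst this
    rw [one_mul, div_self (hpos t ht).ne']
    norm_num
  | succ n ih =>
    intro t ht l hl1 hlb
    have hc0 : (0:ℝ) < c := lt_of_lt_of_le one_pos hc
    have hcn : (0:ℝ) < c ^ n := pow_pos hc0 n
    have hcsn : (0:ℝ) < c ^ (n+1) := pow_pos hc0 _
    by_cases hl : l ≤ b
    · obtain ⟨h1, h2⟩ := H t ht l hl1 hl
      have hcc : c ≤ c ^ (n+1) := by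
        calc c = c ^ 1 := (pow_one c).symm
        _ ≤ c ^ (n+1) := pow_le_pow_right₀ hc (by omega)
      constructor
      · exact le_trans (by gcongr) h1
      · exact h2.trans hcc
    · push_neg at hl
      have hb0 : (0:ℝ) < b := lt_trans one_pos hb
      have h1b : 1 ≤ l / b := (one_le_div hb0).2 hl.le
      have hdb : l / b ≤ b ^ n := by
        rw [div_le_iff₀ hb0]
        calc l ≤ b ^ (n+1) := hlb
        _ = b ^ n * b := pow_succ b n
      have hlt : 1 ≤ l / b * t := one_le_mul_of_one_le_of_one_le h1b ht
      obtain ⟨p1, p2⟩ := H (l / b * t) hlt b hb.le le_rfl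
      obtain ⟨q1, q2⟩ := ih t ht (l / b) h1b hdb
      have hrw : b * (l / b * t) = l * t := by field_simp
      rw [hrw] at p1 p2
      have hmid : 0 < α (l / b * t) := hpos _ hlt
      have ht0 : 0 < α t := hpos t ht
      have hl1t : (1:ℝ) ≤ l * t := one_le_mul_of_one_le_of_one_le hl1 ht
      have hlt0 : 0 < α (l * t) := hpos _ hl1t
      have e : α (l * t) / α (l / b * t) * (α (l / b * t) / α t) = α (l * t) / α t := by
        rw [div_mul_div_comm, mul_comm (α (l / b * t)) (α t), mul_div_mul_right _ _ hmid.ne']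
      have hprod_lo : c⁻¹ * (c ^ n)⁻¹ ≤ α (l * t) / α (l / b * t) * (α (l / b * t) / α t) :=
        mul_le_mul p1 q1 (inv_nonneg.2 hcn.le) (div_pos hlt0 hmid).le
      have hprod_hi : α (l * t) / α (l / b * t) * (α (l / b * t) / α t) ≤ c * c ^ n :=
        mul_le_mul p2 q2 (div_pos hmid ht0).le hc0.le
      rw [e] at hprod_lo hprod_hi
      refine ⟨le_trans (le_of_eq ?_) hprod_lo, le_trans hprod_hi (le_of_eq ?_)⟩
      · rw [pow_succ, mul_inv, mul_comm]
      · rw [pow_succ, mul_comm]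


/-- A Borel measurable `α : [1,∞) → (0,∞)` belongs to the class OR if and
only if `α(t) = exp(β(t) + ∫₁ᵗ γ(τ)/τ dτ)` for some Borel measurable bounded real-valued
functions `β`, `γ` on `[1,∞)`. -/
theorem stmt_1 (α : ℝ → ℝ)
    (hmeas : Measurable ((Set.Ici (1:ℝ)).restrict α))
    (hpos : ∀ t, 1 ≤ t → 0 < α t) :
    (∃ b : ℝ, 1 < b ∧ ∃ c : ℝ, 1 ≤ c ∧ ∀ t, 1 ≤ t → ∀ l, 1 ≤ l → l ≤ b →
        c⁻¹ ≤ α (l * t) / α t ∧ α (l * t) / α t ≤ c) ↔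
    (∃ β γ : ℝ → ℝ,
        Measurable ((Set.Ici (1:ℝ)).restrict β) ∧
        Measurable ((Set.Ici (1:ℝ)).restrict γ) ∧
        (∃ M : ℝ, ∀ t, 1 ≤ t → |β t| ≤ M) ∧
        (∃ M : ℝ, ∀ t, 1 ≤ t → |γ t| ≤ M) ∧
        ∀ t, 1 ≤ t → α t = Real.exp (β t + ∫ τ in (1:ℝ)..t, γ τ / τ)) := by
  constructor
  · rintro ⟨b, hb, c, hc, H⟩
    classical
    have key := key_pow hpos hb hc H
    obtain ⟨n, hn⟩ := pow_unbounded_of_one_lt (Real.exp 1) hb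
    have he0 : (0:ℝ) < Real.exp 1 := Real.exp_pos 1
    have he1 : (1:ℝ) ≤ Real.exp 1 := by
      calc (1:ℝ) = Real.exp 0 := Real.exp_zero.symm
      _ ≤ Real.exp 1 := Real.exp_le_exp.2 zero_le_one
    have hC1 : (1:ℝ) ≤ c ^ n := one_le_pow₀ hc
    set D : ℝ := Real.log (c ^ n) with hDdef
    have hD0 : 0 ≤ D := Real.log_nonneg hC1
    have logbd : ∀ t, 1 ≤ t → ∀ l, 1 ≤ l → l ≤ Real.exp 1 →
        |Real.log (α (l * t)) - Real.log (α t)| ≤ D := by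
      intro t ht l hl1 hl2
      have hlt1 : (1:ℝ) ≤ l * t := one_le_mul_of_one_le_of_one_le hl1 ht
      obtain ⟨h1, h2⟩ := key n t ht l hl1 (hl2.trans hn.le)
      rw [← Real.log_div (hpos _ hlt1).ne' (hpos t ht).ne']
      exact abs_log_le hC1 h1 h2
    set L : ℝ → ℝ := fun t => if 1 ≤ t then Real.log (α t) else 0 with hLdef
    have hLmeas : Measurable L := meas_ext (Real.measurable_log.comp hmeas)
    have hLt : ∀ t, 1 ≤ t → L t = Real.log (α t) := fun t ht => if_pos ht
    set γ : ℝ → ℝ := fun t => if 1 ≤ t then L (Real.exp 1 * t) - L t else 0 with hγdef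
    have hγmeas : Measurable γ :=
      Measurable.ite measurableSet_Ici
        ((hLmeas.comp (measurable_id.const_mul _)).sub hLmeas) measurable_const
    have hγbd : ∀ t, |γ t| ≤ D := by
      intro t
      by_cases ht : 1 ≤ t
      · have het : (1:ℝ) ≤ Real.exp 1 * t := one_le_mul_of_one_le_of_one_le he1 ht
        simp only [hγdef, if_pos ht]
        rw [hLt _ het, hLt _ ht]
        exact logbd t ht (Real.exp 1) he1 le_rfl
      · simp only [hγdef, if_neg ht, abs_zero]
        exact hD0
    set g : ℝ → ℝ := fun τ => γ τ / τ with hgdef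
    have hgmeas : Measurable g := hγmeas.div measurable_id
    have hgbd : ∀ τ, |g τ| ≤ D := by
      intro τ
      by_cases hτ : 1 ≤ τ
      · have hτ0 : (0:ℝ) < τ := lt_of_lt_of_le one_pos hτ
        simp only [hgdef]
        rw [abs_div, abs_of_pos hτ0, div_le_iff₀ hτ0]
        calc |γ τ| ≤ D := hγbd τ
        _ = D * 1 := (mul_one D).symm
        _ ≤ D * τ := by nlinarith
      · simp only [hgdef, hγdef, if_neg hτ, zero_div, abs_zero]
        exact hD0
    have hgInt : ∀ a b : ℝ, IntervalIntegrable g volume a b := intInt_of_bdd hgmeas hgbd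
    set P : ℝ → ℝ := fun t => ∫ τ in (1:ℝ)..t, g τ with hPdef
    have hPcont : Continuous P := intervalIntegral.continuous_primitive hgInt 1
    set β : ℝ → ℝ := fun t => L t - P t with hβdef
    have hβmeas : Measurable β := hLmeas.sub hPcont.measurable
    set h : ℝ → ℝ := fun σ => L σ / σ with hhdef
    have hhmeas : Measurable h := hLmeas.div measurable_id
    have hLloc : ∀ s : ℝ, ∃ B : ℝ, ∀ σ, 1 ≤ σ → σ ≤ s → |L σ| ≤ B := by
      intro s
      obtain ⟨m, hm⟩ := pow_unbounded_of_one_lt s hb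
      refine ⟨Real.log (c ^ m) + |Real.log (α 1)|, ?_⟩
      intro σ h1 h2
      obtain ⟨k1, k2⟩ := key m 1 le_rfl σ h1 (h2.trans hm.le)
      rw [mul_one] at k1 k2
      have hq : |Real.log (α σ / α 1)| ≤ Real.log (c ^ m) :=
        abs_log_le (one_le_pow₀ hc) k1 k2
      rw [Real.log_div (hpos σ h1).ne' (hpos 1 le_rfl).ne'] at hq
      rw [hLt _ h1]
      calc |Real.log (α σ)| = |(Real.log (α σ) - Real.log (α 1)) + Real.log (α 1)| := by ring_nf
      _ ≤ |Real.log (α σ) - Real.log (α 1)| + |Real.log (α 1)| := abs_add_le _ _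
      _ ≤ Real.log (c ^ m) + |Real.log (α 1)| := by linarith
    have hhInt : ∀ a b : ℝ, 1 ≤ a → 1 ≤ b → IntervalIntegrable h volume a b := by
      intro a b ha hb'
      obtain ⟨B, hB⟩ := hLloc (max a b)
      apply intInt_of_bdd_on hhmeas (M := B)
      intro x hx
      have h1x : 1 ≤ x ∧ x ≤ max a b := by
        rcases Set.mem_uIcc.1 hx with ⟨hxa, hxb⟩ | ⟨hxb, hxa⟩
        · exact ⟨le_trans ha hxa, hxb.trans (le_max_right a b)⟩
        · exact ⟨le_trans hb' hxb, hxa.trans (le_max_left a b)⟩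
      have hx0 : (0:ℝ) < x := lt_of_lt_of_le one_pos h1x.1
      simp only [hhdef]
      rw [abs_div, abs_of_pos hx0]
      calc |L x| / x ≤ |L x| / 1 := by gcongr; exact h1x.1
      _ = |L x| := div_one _
      _ ≤ B := hB x h1x.1 h1x.2
    set Cst : ℝ := ∫ σ in (1:ℝ)..(Real.exp 1), h σ with hCst
    have hP : ∀ t, 1 ≤ t → P t = (∫ σ in t..(Real.exp 1 * t), h σ) - Cst := by
      intro t ht
      have het : (1:ℝ) ≤ Real.exp 1 * t := one_le_mul_of_one_le_of_one_le he1 ht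
      have hte : t ≤ Real.exp 1 * t := by nlinarith
      have heq : P t = ∫ τ in (1:ℝ)..t,
          (Real.exp 1 * h (Real.exp 1 * τ) - h τ) := by
        apply intervalIntegral.integral_congr
        intro τ hτ
        rw [Set.uIcc_of_le ht] at hτ
        have hτ1 : 1 ≤ τ := hτ.1
        have hτ0 : τ ≠ 0 := by positivity
        simp only [hgdef, hγdef, hhdef, if_pos hτ1]
        field_simp
      have hint1 : IntervalIntegrable (fun τ => h (Real.exp 1 * τ)) volume 1 t := by
        have h2 := (hhInt (Real.exp 1) (Real.exp 1 * t) he1 het).comp_mul_left (c := Real.exp 1)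
        have h3 : Real.exp 1 * t / Real.exp 1 = t := by field_simp
        rwa [div_self he0.ne', h3] at h2
      have hint1' : IntervalIntegrable (fun τ => Real.exp 1 * h (Real.exp 1 * τ)) volume 1 t :=
        hint1.const_mul _
      rw [heq, intervalIntegral.integral_sub hint1' (hhInt 1 t le_rfl ht)]
      have h2 : ∫ τ in (1:ℝ)..t, Real.exp 1 * h (Real.exp 1 * τ)
          = ∫ σ in (Real.exp 1)..(Real.exp 1 * t), h σ := by
        rw [intervalIntegral.integral_const_mul,
          intervalIntegral.integral_comp_mul_left (fun σ => h σ) he0.ne', mul_one,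
          smul_eq_mul, ← mul_assoc, mul_inv_cancel₀ he0.ne', one_mul]
      rw [h2]
      have a1 : Cst + (∫ σ in (Real.exp 1)..(Real.exp 1 * t), h σ)
          = ∫ σ in (1:ℝ)..(Real.exp 1 * t), h σ :=
        intervalIntegral.integral_add_adjacent_intervals
          (hhInt 1 (Real.exp 1) le_rfl he1) (hhInt _ _ he1 het)
      have a2 : (∫ σ in (1:ℝ)..t, h σ) + (∫ σ in t..(Real.exp 1 * t), h σ)
          = ∫ σ in (1:ℝ)..(Real.exp 1 * t), h σ :=
        intervalIntegral.integral_add_adjacent_intervals (hhInt 1 t le_rfl ht)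
          (hhInt _ _ ht het)
      linarith
    have hβbd : ∀ t, 1 ≤ t → |β t| ≤ D + |Cst| := by
      intro t ht
      have ht0 : (0:ℝ) < t := lt_of_lt_of_le one_pos ht
      have het : (1:ℝ) ≤ Real.exp 1 * t := one_le_mul_of_one_le_of_one_le he1 ht
      have hte : t ≤ Real.exp 1 * t := by nlinarith
      have hdivt : Real.exp 1 * t / t = Real.exp 1 := by field_simp
      have hconst : ∫ σ in t..(Real.exp 1 * t), L t * (1/σ) = L t := by
        rw [int_c_div ht0 hte, hdivt, Real.log_exp, mul_one]
      have hDi : ∫ σ in t..(Real.exp 1 * t), D * (1/σ) = D := by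
        rw [int_c_div ht0 hte, hdivt, Real.log_exp, mul_one]
      have hi1 : IntervalIntegrable (fun σ => L t * (1/σ)) volume t (Real.exp 1 * t) :=
        intInt_c_div ht het
      have hiD : IntervalIntegrable (fun σ => D * (1/σ)) volume t (Real.exp 1 * t) :=
        intInt_c_div ht het
      have hi2 := hhInt t (Real.exp 1 * t) ht het
      have hsub : (∫ σ in t..(Real.exp 1 * t), h σ) - L t
          = ∫ σ in t..(Real.exp 1 * t), (h σ - L t * (1/σ)) := by
        rw [intervalIntegral.integral_sub hi2 hi1, hconst]
      have habs : |(∫ σ in t..(Real.exp 1 * t), h σ) - L t| ≤ D := by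
        rw [hsub]
        calc |∫ σ in t..(Real.exp 1 * t), (h σ - L t * (1/σ))|
            ≤ ∫ σ in t..(Real.exp 1 * t), |h σ - L t * (1/σ)| :=
              intervalIntegral.abs_integral_le_integral_abs hte
        _ ≤ ∫ σ in t..(Real.exp 1 * t), D * (1/σ) := by
            apply intervalIntegral.integral_mono_on hte ((hi2.sub hi1).abs) hiD
            intro σ hσ
            obtain ⟨hσ1, hσ2⟩ := hσ
            have hσ1' : 1 ≤ σ := le_trans ht hσ1
            have hσ0 : (0:ℝ) < σ := lt_of_lt_of_le one_pos hσ1'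
            have hls : |L σ - L t| ≤ D := by
              have h1q : 1 ≤ σ / t := (one_le_div ht0).2 hσ1
              have h2q : σ / t ≤ Real.exp 1 := by
                rw [div_le_iff₀ ht0]; linarith
              have hrw : σ / t * t = σ := by field_simp
              rw [hLt σ hσ1', hLt t ht, ← hrw]
              exact logbd t ht (σ / t) h1q h2q
            have heq2 : h σ - L t * (1/σ) = (L σ - L t) / σ := by
              simp only [hhdef]
              field_simp
            rw [heq2, abs_div, abs_of_pos hσ0, mul_one_div]
            gcongr
        _ = D := hDi
      have hβt : β t = -((∫ σ in t..(Real.exp 1 * t), h σ) - L t) + Cst := by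
        simp only [hβdef]
        rw [hP t ht]; ring
      rw [hβt]
      calc |-((∫ σ in t..(Real.exp 1 * t), h σ) - L t) + Cst|
          ≤ |-((∫ σ in t..(Real.exp 1 * t), h σ) - L t)| + |Cst| := abs_add_le _ _
      _ = |(∫ σ in t..(Real.exp 1 * t), h σ) - L t| + |Cst| := by rw [abs_neg]
      _ ≤ D + |Cst| := by linarith
    refine ⟨β, γ, hβmeas.comp measurable_subtype_coe, hγmeas.comp measurable_subtype_coe,
      ⟨D + |Cst|, hβbd⟩, ⟨D, fun t _ => hγbd t⟩, ?_⟩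
    intro t ht
    have hsum : β t + ∫ τ in (1:ℝ)..t, γ τ / τ = Real.log (α t) := by
      simp only [hβdef, hPdef, hgdef]
      rw [hLt t ht]; ring
    rw [hsum, Real.exp_log (hpos t ht)]
  · rintro ⟨β, γ, hβm, hγm, ⟨Mβ, hMβ⟩, ⟨Mγ, hMγ⟩, hrep⟩
    classical
    have hMβ0 : 0 ≤ Mβ := (abs_nonneg _).trans (hMβ 1 le_rfl)
    have hMγ0 : 0 ≤ Mγ := (abs_nonneg _).trans (hMγ 1 le_rfl)
    set γ₀ : ℝ → ℝ := fun t => if 1 ≤ t then γ t else 0 with hγ₀def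
    have hγ₀m : Measurable γ₀ := meas_ext hγm
    have hγ₀bd : ∀ t, |γ₀ t| ≤ Mγ := by
      intro t
      by_cases ht : 1 ≤ t
      · simp only [hγ₀def, if_pos ht]; exact hMγ t ht
      · simp only [hγ₀def, if_neg ht, abs_zero]; exact hMγ0
    set g : ℝ → ℝ := fun τ => γ₀ τ / τ with hgdef
    have hgm : Measurable g := hγ₀m.div measurable_id
    have hgInt : ∀ a b : ℝ, IntervalIntegrable g volume a b := by
      apply intInt_of_bdd hgm (M := Mγ)
      intro τ
      by_cases hτ : 1 ≤ τ
      · have hτ0 : (0:ℝ) < τ := lt_of_lt_of_le one_pos hτ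
        simp only [hgdef]
        rw [abs_div, abs_of_pos hτ0, div_le_iff₀ hτ0]
        calc |γ₀ τ| ≤ Mγ := hγ₀bd τ
        _ = Mγ * 1 := (mul_one _).symm
        _ ≤ Mγ * τ := by nlinarith
      · simp only [hgdef, hγ₀def, if_neg hτ, zero_div, abs_zero]; exact hMγ0
    have hrep' : ∀ t, 1 ≤ t → α t = Real.exp (β t + ∫ τ in (1:ℝ)..t, g τ) := by
      intro t ht
      rw [hrep t ht]
      congr 2
      apply intervalIntegral.integral_congr
      intro τ hτ
      rw [Set.uIcc_of_le ht] at hτ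
      simp only [hgdef, hγ₀def, if_pos hτ.1]
    have he2 : (2:ℝ) ≤ Real.exp 1 := by
      have := Real.add_one_le_exp 1; linarith
    refine ⟨2, one_lt_two, Real.exp (2 * Mβ + Mγ), ?_, ?_⟩
    · calc (1:ℝ) = Real.exp 0 := Real.exp_zero.symm
      _ ≤ Real.exp (2 * Mβ + Mγ) := Real.exp_le_exp.2 (by linarith)
    intro t ht l hl1 hl2
    have ht0 : (0:ℝ) < t := lt_of_lt_of_le one_pos ht
    have hlt1 : (1:ℝ) ≤ l * t := one_le_mul_of_one_le_of_one_le hl1 ht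
    have htl : t ≤ l * t := by nlinarith
    have hI : (∫ τ in (1:ℝ)..(l * t), g τ) - (∫ τ in (1:ℝ)..t, g τ)
        = ∫ τ in t..(l * t), g τ := by
      rw [← intervalIntegral.integral_add_adjacent_intervals (hgInt 1 t) (hgInt t (l * t))]
      ring
    have hratio : α (l * t) / α t
        = Real.exp ((β (l * t) - β t) + ∫ τ in t..(l * t), g τ) := by
      rw [hrep' _ hlt1, hrep' t ht, ← Real.exp_sub]
      congr 1
      linarith [hI]
    have hIbd : |∫ τ in t..(l * t), g τ| ≤ Mγ := by
      have hiMg : IntervalIntegrable (fun τ => Mγ * (1/τ)) volume t (l * t) :=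
        intInt_c_div ht hlt1
      calc |∫ τ in t..(l * t), g τ| ≤ ∫ τ in t..(l * t), |g τ| :=
            intervalIntegral.abs_integral_le_integral_abs htl
      _ ≤ ∫ τ in t..(l * t), Mγ * (1/τ) := by
          apply intervalIntegral.integral_mono_on htl ((hgInt t (l * t)).abs) hiMg
          intro τ hτ
          have hτ1 : 1 ≤ τ := le_trans ht hτ.1
          have hτ0 : (0:ℝ) < τ := lt_of_lt_of_le one_pos hτ1
          simp only [hgdef]
          rw [abs_div, abs_of_pos hτ0, mul_one_div]
          gcongr
          exact hγ₀bd τ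
      _ = Mγ * Real.log (l * t / t) := int_c_div ht0 htl
      _ ≤ Mγ := by
          have hlt : l * t / t = l := by field_simp
          rw [hlt]
          have h1 : Real.log l ≤ 1 := by
            calc Real.log l ≤ Real.log (Real.exp 1) :=
                  Real.log_le_log (lt_of_lt_of_le one_pos hl1) (hl2.trans he2)
            _ = 1 := Real.log_exp 1
          have h0 : 0 ≤ Real.log l := Real.log_nonneg hl1
          nlinarith
    have hβd : |β (l * t) - β t| ≤ 2 * Mβ := by
      calc |β (l * t) - β t| ≤ |β (l * t)| + |β t| := abs_sub _ _
      _ ≤ 2 * Mβ := by linarith [hMβ _ hlt1, hMβ t ht]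
    rw [hratio]
    obtain ⟨i1, i2⟩ := abs_le.1 hIbd
    obtain ⟨b1, b2⟩ := abs_le.1 hβd
    constructor
    · rw [← Real.exp_neg]
      exact Real.exp_le_exp.2 (by linarith)
    · exact Real.exp_le_exp.2 (by linarith)
end

section
/- Let θ ∈ ℝ, δ > 0, and 0 < λ < 1. Define α : [1,∞) → (0,∞) by α(t) = t^{θ + δ·sin((log log t)^λ)} if t > e, and α(t) = t^θ if 1 ≤ t ≤ e. Then α belongs to OR, with lower Matuszewska index σ₀(α) = θ − δ and upper Matuszewska index σ₁(α) = θ + δ. -/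
/-- The class OR of O-regularly varying functions: Borel measurable
`α : [1,∞) → (0,∞)` such that `c⁻¹ ≤ α (l * t) / α t ≤ c` for all `t ≥ 1`
and `l ∈ [1, b]`, for some `b > 1` and `c ≥ 1`. -/
def IsOR (α : ℝ → ℝ) : Prop :=
  Measurable ((Set.Ici (1:ℝ)).restrict α) ∧ (∀ t, 1 ≤ t → 0 < α t) ∧
  ∃ b : ℝ, 1 < b ∧ ∃ c : ℝ, 1 ≤ c ∧ ∀ t, 1 ≤ t → ∀ l, 1 ≤ l → l ≤ b →
    c⁻¹ ≤ α (l * t) / α t ∧ α (l * t) / α t ≤ c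

/-- The set of lower Matuszewska exponents. -/
def lowerMSet (α : ℝ → ℝ) : Set ℝ :=
  {r₀ | ∃ c₀ : ℝ, 0 < c₀ ∧ ∀ t, 1 ≤ t → ∀ l, 1 ≤ l → c₀ * l ^ r₀ ≤ α (l * t) / α t}

/-- The set of upper Matuszewska exponents. -/
def upperMSet (α : ℝ → ℝ) : Set ℝ :=
  {r₁ | ∃ c₁ : ℝ, 0 < c₁ ∧ ∀ t, 1 ≤ t → ∀ l, 1 ≤ l → α (l * t) / α t ≤ c₁ * l ^ r₁}

/-- The lower Matuszewska index `σ₀(α)`. -/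
noncomputable def sigma0 (α : ℝ → ℝ) : ℝ := sSup (lowerMSet α)

/-- The upper Matuszewska index `σ₁(α)`. -/
noncomputable def sigma1 (α : ℝ → ℝ) : ℝ := sInf (upperMSet α)

/-- The oscillating function `α(t) = t^{θ + δ sin((log log t)^λ)}` for `t > e`
and `α(t) = t^θ` for `1 ≤ t ≤ e`. -/
noncomputable def alphaOsc (θ δ lam : ℝ) : ℝ → ℝ := fun t =>
  if Real.exp 1 < t then t ^ (θ + δ * Real.sin (Real.log (Real.log t) ^ lam))
  else t ^ θ


open Real

noncomputable def Ff (θ δ lam : ℝ) (t : ℝ) : ℝ :=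
  if Real.exp 1 < t then θ + δ * Real.sin (Real.log (Real.log t) ^ lam) else θ

lemma alphaOsc_eq (θ δ lam t : ℝ) :
    (if Real.exp 1 < t then t ^ (θ + δ * Real.sin (Real.log (Real.log t) ^ lam))
      else t ^ θ) = t ^ Ff θ δ lam t := by
  unfold Ff; split_ifs <;> rfl

lemma Ff_le {θ δ lam : ℝ} (hδ : 0 < δ) (t : ℝ) : Ff θ δ lam t ≤ θ + δ := by
  unfold Ff; split_ifs with h
  · nlinarith [Real.sin_le_one (Real.log (Real.log t) ^ lam)]
  · linarith

lemma le_Ff {θ δ lam : ℝ} (hδ : 0 < δ) (t : ℝ) : θ - δ ≤ Ff θ δ lam t := by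
  unfold Ff; split_ifs with h
  · nlinarith [Real.neg_one_le_sin (Real.log (Real.log t) ^ lam)]
  · linarith

lemma abs_Ff_sub_le {θ δ lam : ℝ} (hδ : 0 < δ) (a b : ℝ) :
    |Ff θ δ lam a - Ff θ δ lam b| ≤ 2 * δ := by
  rw [abs_le]
  constructor <;> nlinarith [Ff_le (θ := θ) (lam := lam) hδ a, le_Ff (θ := θ) (lam := lam) hδ a,
    Ff_le (θ := θ) (lam := lam) hδ b, le_Ff (θ := θ) (lam := lam) hδ b]

lemma abs_sin_sub_sin (x y : ℝ) : |Real.sin x - Real.sin y| ≤ |x - y| := by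
  rw [Real.sin_sub_sin]
  rw [abs_mul, abs_mul]
  have h1 : |Real.sin ((x - y) / 2)| ≤ |(x - y) / 2| := Real.abs_sin_le_abs
  have h2 : |Real.cos ((x + y) / 2)| ≤ 1 := Real.abs_cos_le_one _
  have : |(2:ℝ)| = 2 := by norm_num
  calc |(2:ℝ)| * |Real.sin ((x - y) / 2)| * |Real.cos ((x + y) / 2)|
      ≤ |(2:ℝ)| * |(x - y) / 2| * 1 := by
        apply mul_le_mul _ h2 (abs_nonneg _) (by positivity)
        exact mul_le_mul_of_nonneg_left h1 (abs_nonneg _)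
    _ = |x - y| := by rw [this, abs_div, abs_two, mul_one]; ring

lemma rpow_sub_rpow_le {u v lam : ℝ} (hu : 1 ≤ u) (huv : u ≤ v) (h0 : 0 ≤ lam) (h1 : lam ≤ 1) :
    v ^ lam - u ^ lam ≤ lam * u ^ (lam - 1) * (v - u) := by
  have hu0 : 0 < u := lt_of_lt_of_le one_pos hu
  set s : ℝ := (v - u) / u with hsdef
  have hs0 : 0 ≤ s := div_nonneg (by linarith) hu0.le
  have hveq : v = u * (1 + s) := by rw [hsdef]; field_simp; ring
  have hb : (1 + s) ^ lam ≤ 1 + lam * s :=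
    rpow_one_add_le_one_add_mul_self (by linarith) h0 h1
  have hvl : v ^ lam ≤ u ^ lam * (1 + lam * s) := by
    rw [hveq, Real.mul_rpow hu0.le (by linarith)]
    exact mul_le_mul_of_nonneg_left hb (Real.rpow_nonneg hu0.le _)
  have hupow : u ^ (lam - 1) = u ^ lam / u := by
    rw [Real.rpow_sub hu0, Real.rpow_one]
  calc v ^ lam - u ^ lam ≤ u ^ lam * (1 + lam * s) - u ^ lam := by linarith
    _ = lam * u ^ (lam - 1) * (v - u) := by
        rw [hupow, hsdef]; field_simp; ring

lemma key {θ δ lam : ℝ} (hδ : 0 < δ) (hlam0 : 0 < lam) (hlam1 : lam < 1)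
    (ε : ℝ) (hε : 0 < ε) :
    ∃ C : ℝ, 0 ≤ C ∧ ∀ t, 1 ≤ t → ∀ l, 1 ≤ l →
      |Ff θ δ lam (l * t) - Ff θ δ lam t| * Real.log t ≤ ε * Real.log l + C := by
  set η : ℝ := ε / (δ * lam) with hηdef
  have hη : 0 < η := div_pos hε (by positivity)
  set U : ℝ := max 1 (η ^ (lam - 1)⁻¹) with hUdef
  have hU1 : 1 ≤ U := le_max_left _ _
  have hUη : U ^ (lam - 1) ≤ η := by
    have h1 : U ^ (lam - 1) ≤ (η ^ (lam - 1)⁻¹) ^ (lam - 1) :=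
      Real.rpow_le_rpow_of_nonpos (Real.rpow_pos_of_pos hη _)
        (le_max_right _ _) (by linarith)
    calc U ^ (lam - 1) ≤ (η ^ (lam - 1)⁻¹) ^ (lam - 1) := h1
      _ = η := by
          rw [← Real.rpow_mul hη.le, inv_mul_cancel₀ (by intro h; apply absurd h; linarith : lam - 1 ≠ 0), Real.rpow_one]
  refine ⟨2 * δ * Real.exp U, by positivity, ?_⟩
  intro t ht l hl
  have ht0 : 0 < t := lt_of_lt_of_le one_pos ht
  have hl0 : 0 < l := lt_of_lt_of_le one_pos hl
  set s : ℝ := Real.log t with hsdef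
  set m : ℝ := Real.log l with hmdef
  have hs0 : 0 ≤ s := Real.log_nonneg ht
  have hm0 : 0 ≤ m := Real.log_nonneg hl
  by_cases hcase : s ≤ Real.exp U
  · have h1 : |Ff θ δ lam (l * t) - Ff θ δ lam t| * s ≤ 2 * δ * s :=
      mul_le_mul_of_nonneg_right (abs_Ff_sub_le hδ _ _) hs0
    have h2 : 2 * δ * s ≤ 2 * δ * Real.exp U := by nlinarith
    nlinarith [mul_nonneg hε.le hm0]
  · push_neg at hcase
    have hs1 : 1 < s := lt_of_le_of_lt (Real.one_le_exp (by linarith : (0:ℝ) ≤ U)) hcase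
    have hte : Real.exp 1 < t := (Real.lt_log_iff_exp_lt ht0).mp hs1
    have hlte : Real.exp 1 < l * t :=
      lt_of_lt_of_le hte (le_mul_of_one_le_left ht0.le hl)
    set u : ℝ := Real.log s with hudef
    have hu1 : U ≤ u := le_of_lt ((Real.lt_log_iff_exp_lt (by linarith)).mpr hcase)
    have hu1' : 1 ≤ u := le_trans hU1 hu1
    have hlogmul : Real.log (l * t) = m + s := by
      rw [Real.log_mul (ne_of_gt hl0) (ne_of_gt ht0)]
    set v : ℝ := Real.log (m + s) with hvdef
    have huv : u ≤ v := Real.log_le_log (by linarith) (by linarith)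
    have hFdiff : Ff θ δ lam (l * t) - Ff θ δ lam t
        = δ * (Real.sin (v ^ lam) - Real.sin (u ^ lam)) := by
      unfold Ff
      rw [if_pos hlte, if_pos hte, hlogmul, ← hsdef, ← hudef, ← hvdef]
      ring
    have hsin : |Real.sin (v ^ lam) - Real.sin (u ^ lam)| ≤ v ^ lam - u ^ lam := by
      refine le_trans (abs_sin_sub_sin _ _) ?_
      rw [abs_of_nonneg (by nlinarith [Real.rpow_le_rpow (by linarith : (0:ℝ) ≤ u) huv hlam0.le])]
    have hpow : v ^ lam - u ^ lam ≤ lam * u ^ (lam - 1) * (v - u) :=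
      rpow_sub_rpow_le hu1' huv hlam0.le hlam1.le
    have hvu : v - u ≤ m / s := by
      rw [hvdef, hudef, ← Real.log_div (by linarith) (by linarith)]
      have := Real.log_le_sub_one_of_pos (show (0:ℝ) < (m + s) / s by positivity)
      have heq : (m + s) / s - 1 = m / s := by field_simp; ring
      linarith [heq ▸ this]
    have huexp : u ^ (lam - 1) ≤ η :=
      le_trans (Real.rpow_le_rpow_of_nonpos (by linarith) hu1 (by linarith)) hUη
    have hupos : 0 ≤ u ^ (lam - 1) := Real.rpow_nonneg (by linarith) _
    have hstep : |Ff θ δ lam (l * t) - Ff θ δ lam t| * s ≤ δ * (lam * u ^ (lam - 1) * (m / s)) * s := by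
      rw [hFdiff, abs_mul, abs_of_pos hδ]
      have h1 : |Real.sin (v ^ lam) - Real.sin (u ^ lam)| ≤ lam * u ^ (lam - 1) * (m / s) := by
        refine le_trans hsin (le_trans hpow ?_)
        apply mul_le_mul_of_nonneg_left hvu (by positivity)
      have h2 : δ * |Real.sin (v ^ lam) - Real.sin (u ^ lam)| ≤ δ * (lam * u ^ (lam - 1) * (m / s)) :=
        mul_le_mul_of_nonneg_left h1 hδ.le
      exact mul_le_mul_of_nonneg_right h2 hs0
    have hfin : δ * (lam * u ^ (lam - 1) * (m / s)) * s = δ * lam * u ^ (lam - 1) * m := by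
      field_simp
    have hlast : δ * lam * u ^ (lam - 1) * m ≤ ε * m := by
      have h1 : δ * lam * u ^ (lam - 1) ≤ ε := by
        calc δ * lam * u ^ (lam - 1) ≤ δ * lam * η :=
              mul_le_mul_of_nonneg_left huexp (by positivity)
          _ = ε := by
              rw [hηdef, mul_comm, div_mul_cancel₀ _ (ne_of_gt (by positivity : (0:ℝ) < δ * lam))]
      exact mul_le_mul_of_nonneg_right h1 hm0
    have hCpos : 0 ≤ 2 * δ * Real.exp U := by positivity
    calc |Ff θ δ lam (l * t) - Ff θ δ lam t| * s
        ≤ δ * (lam * u ^ (lam - 1) * (m / s)) * s := hstep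
      _ = δ * lam * u ^ (lam - 1) * m := hfin
      _ ≤ ε * m := hlast
      _ ≤ ε * m + 2 * δ * Real.exp U := by linarith

lemma alphaOsc_apply (θ δ lam t : ℝ) : alphaOsc θ δ lam t = t ^ Ff θ δ lam t := by
  unfold alphaOsc Ff; split_ifs <;> rfl

lemma ratio_eq (θ δ lam : ℝ) {t l : ℝ} (ht : 1 ≤ t) (hl : 1 ≤ l) :
    alphaOsc θ δ lam (l * t) / alphaOsc θ δ lam t =
      Real.exp (Ff θ δ lam (l * t) * Real.log l
        + (Ff θ δ lam (l * t) - Ff θ δ lam t) * Real.log t) := by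
  have ht0 : 0 < t := lt_of_lt_of_le one_pos ht
  have hl0 : 0 < l := lt_of_lt_of_le one_pos hl
  rw [alphaOsc_apply, alphaOsc_apply, Real.rpow_def_of_pos ht0,
    Real.rpow_def_of_pos (by positivity : (0:ℝ) < l * t), ← Real.exp_sub]
  congr 1
  rw [Real.log_mul (ne_of_gt hl0) (ne_of_gt ht0)]
  ring

lemma upper_mem {θ δ lam : ℝ} (hδ : 0 < δ) (hlam0 : 0 < lam) (hlam1 : lam < 1)
    {ε : ℝ} (hε : 0 < ε) : (θ + δ + ε) ∈ upperMSet (alphaOsc θ δ lam) := by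
  obtain ⟨C, hC0, hC⟩ := key (θ := θ) hδ hlam0 hlam1 ε hε
  refine ⟨Real.exp C, Real.exp_pos _, ?_⟩
  intro t ht l hl
  have hl0 : 0 < l := lt_of_lt_of_le one_pos hl
  rw [ratio_eq θ δ lam ht hl]
  have hm0 : 0 ≤ Real.log l := Real.log_nonneg hl
  have hs0 : 0 ≤ Real.log t := Real.log_nonneg ht
  have h1 : Ff θ δ lam (l * t) * Real.log l ≤ (θ + δ) * Real.log l :=
    mul_le_mul_of_nonneg_right (Ff_le hδ _) hm0
  have h2 : (Ff θ δ lam (l * t) - Ff θ δ lam t) * Real.log t ≤ ε * Real.log l + C :=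
    le_trans (mul_le_mul_of_nonneg_right (le_abs_self _) hs0) (hC t ht l hl)
  calc Real.exp (Ff θ δ lam (l * t) * Real.log l
        + (Ff θ δ lam (l * t) - Ff θ δ lam t) * Real.log t)
      ≤ Real.exp (C + (θ + δ + ε) * Real.log l) := by
        apply Real.exp_le_exp.mpr; linarith
    _ = Real.exp C * l ^ (θ + δ + ε) := by
        rw [Real.exp_add, Real.rpow_def_of_pos hl0, mul_comm (θ + δ + ε)]

lemma lower_mem {θ δ lam : ℝ} (hδ : 0 < δ) (hlam0 : 0 < lam) (hlam1 : lam < 1)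
    {ε : ℝ} (hε : 0 < ε) : (θ - δ - ε) ∈ lowerMSet (alphaOsc θ δ lam) := by
  obtain ⟨C, hC0, hC⟩ := key (θ := θ) hδ hlam0 hlam1 ε hε
  refine ⟨Real.exp (-C), Real.exp_pos _, ?_⟩
  intro t ht l hl
  have hl0 : 0 < l := lt_of_lt_of_le one_pos hl
  rw [ratio_eq θ δ lam ht hl]
  have hm0 : 0 ≤ Real.log l := Real.log_nonneg hl
  have hs0 : 0 ≤ Real.log t := Real.log_nonneg ht
  have h1 : (θ - δ) * Real.log l ≤ Ff θ δ lam (l * t) * Real.log l :=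
    mul_le_mul_of_nonneg_right (le_Ff hδ _) hm0
  have h2 : -(ε * Real.log l + C) ≤ (Ff θ δ lam (l * t) - Ff θ δ lam t) * Real.log t := by
    have habs : -((ε * Real.log l + C)) ≤ -(|Ff θ δ lam (l * t) - Ff θ δ lam t| * Real.log t) :=
      neg_le_neg (hC t ht l hl)
    have hneg : -(|Ff θ δ lam (l * t) - Ff θ δ lam t| * Real.log t)
        ≤ (Ff θ δ lam (l * t) - Ff θ δ lam t) * Real.log t := by
      have := mul_le_mul_of_nonneg_right (neg_abs_le (Ff θ δ lam (l * t) - Ff θ δ lam t)) hs0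
      linarith [this]
    linarith
  calc Real.exp (-C) * l ^ (θ - δ - ε)
      = Real.exp (-C + (θ - δ - ε) * Real.log l) := by
        rw [Real.exp_add, Real.rpow_def_of_pos hl0, mul_comm (θ - δ - ε)]
    _ ≤ Real.exp (Ff θ δ lam (l * t) * Real.log l
        + (Ff θ δ lam (l * t) - Ff θ δ lam t) * Real.log t) := by
        apply Real.exp_le_exp.mpr; linarith

lemma peak_val {θ δ lam : ℝ} (hlam0 : 0 < lam) (hlam1 : lam < 1) {w : ℝ} (hw : 1 ≤ w) :
    alphaOsc θ δ lam (Real.exp (Real.exp (w ^ lam⁻¹)))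
      = Real.exp (Real.exp (w ^ lam⁻¹)) ^ (θ + δ * Real.sin w) ∧
    w ≤ Real.log (Real.exp (Real.exp (w ^ lam⁻¹))) ∧
    1 ≤ Real.exp (Real.exp (w ^ lam⁻¹)) := by
  have hw0 : 0 < w := lt_of_lt_of_le one_pos hw
  have hwp : 0 < w ^ lam⁻¹ := Real.rpow_pos_of_pos hw0 _
  have hlog : Real.log (Real.exp (Real.exp (w ^ lam⁻¹))) = Real.exp (w ^ lam⁻¹) :=
    Real.log_exp _
  have hgt : Real.exp 1 < Real.exp (Real.exp (w ^ lam⁻¹)) := by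
    apply Real.exp_lt_exp.mpr
    exact lt_of_le_of_lt (le_refl 1) (Real.one_lt_exp_iff.mpr hwp)
  refine ⟨?_, ?_, ?_⟩
  · unfold alphaOsc
    rw [if_pos hgt, hlog, Real.log_exp, ← Real.rpow_mul hw0.le,
      inv_mul_cancel₀ (ne_of_gt hlam0), Real.rpow_one]
  · rw [hlog]
    have h1 : w ≤ w ^ lam⁻¹ := by
      have hinv : 1 ≤ lam⁻¹ := by
        rw [le_inv_comm₀ one_pos hlam0]
        simpa using hlam1.le
      calc w = w ^ (1:ℝ) := (Real.rpow_one w).symm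
        _ ≤ w ^ lam⁻¹ := Real.rpow_le_rpow_of_exponent_le hw hinv
    linarith [Real.add_one_le_exp (w ^ lam⁻¹)]
  · exact le_of_lt (lt_trans (by linarith [Real.exp_pos 1, Real.add_one_le_exp 1] :
      (1:ℝ) < Real.exp 1) hgt)

lemma alphaOsc_one (θ δ lam : ℝ) : alphaOsc θ δ lam 1 = 1 := by
  unfold alphaOsc
  rw [if_neg (by linarith [Real.add_one_le_exp 1] : ¬ Real.exp 1 < 1), Real.one_rpow]

lemma upper_tight {θ δ lam : ℝ} (hδ : 0 < δ) (hlam0 : 0 < lam) (hlam1 : lam < 1)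
    {r : ℝ} (hr : r ∈ upperMSet (alphaOsc θ δ lam)) : θ + δ ≤ r := by
  by_contra hlt
  push_neg at hlt
  obtain ⟨c, hc, hbound⟩ := hr
  have hd : 0 < θ + δ - r := by linarith
  obtain ⟨k, hk⟩ := exists_nat_gt (Real.log c / (θ + δ - r))
  set w : ℝ := Real.pi / 2 + (k : ℝ) * (2 * Real.pi) with hw
  have hπ := Real.pi_gt_three
  have hk0 : (0:ℝ) ≤ (k:ℝ) := Nat.cast_nonneg k
  have hw1 : 1 ≤ w := by
    have h2 : (0:ℝ) ≤ (k:ℝ) * (2 * Real.pi) := by positivity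
    rw [hw]; linarith
  have hsinw : Real.sin w = 1 := by
    rw [hw, Real.sin_add_nat_mul_two_pi, Real.sin_pi_div_two]
  obtain ⟨hval, hlogge, hone⟩ := peak_val (θ := θ) (δ := δ) hlam0 hlam1 hw1
  set l : ℝ := Real.exp (Real.exp (w ^ lam⁻¹)) with hldef
  have hl0 : 0 < l := Real.exp_pos _
  have h := hbound 1 le_rfl l hone
  rw [mul_one, alphaOsc_one, div_one, hval, hsinw, mul_one] at h
  have h2 : l ^ (θ + δ - r) ≤ c := by
    rw [Real.rpow_sub hl0, div_le_iff₀ (Real.rpow_pos_of_pos hl0 r)]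
    exact h
  have h3 : (θ + δ - r) * Real.log l ≤ Real.log c := by
    have := Real.log_le_log (Real.rpow_pos_of_pos hl0 _) h2
    rwa [Real.log_rpow hl0] at this
  have h4 : (k : ℝ) ≤ Real.log l := by
    have hwk : (k : ℝ) ≤ w := by
      have : (k:ℝ) * 1 ≤ (k:ℝ) * (2 * Real.pi) := by nlinarith
      rw [hw]; linarith
    linarith
  rw [div_lt_iff₀ hd] at hk
  have h6 : (θ + δ - r) * (k : ℝ) ≤ (θ + δ - r) * Real.log l :=
    mul_le_mul_of_nonneg_left h4 hd.le
  nlinarith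

lemma lower_tight {θ δ lam : ℝ} (hδ : 0 < δ) (hlam0 : 0 < lam) (hlam1 : lam < 1)
    {r : ℝ} (hr : r ∈ lowerMSet (alphaOsc θ δ lam)) : r ≤ θ - δ := by
  by_contra hlt
  push_neg at hlt
  obtain ⟨c, hc, hbound⟩ := hr
  have hd : 0 < r - (θ - δ) := by linarith
  obtain ⟨k, hk⟩ := exists_nat_gt (-Real.log c / (r - (θ - δ)))
  set w : ℝ := Real.pi / 2 + Real.pi + (k : ℝ) * (2 * Real.pi) with hw
  have hπ := Real.pi_gt_three
  have hk0 : (0:ℝ) ≤ (k:ℝ) := Nat.cast_nonneg k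
  have hw1 : 1 ≤ w := by
    have h2 : (0:ℝ) ≤ (k:ℝ) * (2 * Real.pi) := by positivity
    rw [hw]; linarith
  have hsinw : Real.sin w = -1 := by
    rw [hw, Real.sin_add_nat_mul_two_pi, Real.sin_add_pi, Real.sin_pi_div_two]
  obtain ⟨hval, hlogge, hone⟩ := peak_val (θ := θ) (δ := δ) hlam0 hlam1 hw1
  set l : ℝ := Real.exp (Real.exp (w ^ lam⁻¹)) with hldef
  have hl0 : 0 < l := Real.exp_pos _
  have h := hbound 1 le_rfl l hone
  rw [mul_one, alphaOsc_one, div_one, hval, hsinw] at h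
  have heq : θ + δ * (-1) = θ - δ := by ring
  rw [heq] at h
  have h2 : c ≤ l ^ (θ - δ - r) := by
    rw [Real.rpow_sub hl0, le_div_iff₀ (Real.rpow_pos_of_pos hl0 r)]
    exact h
  have h3 : Real.log c ≤ (θ - δ - r) * Real.log l := by
    have := Real.log_le_log hc h2
    rwa [Real.log_rpow hl0] at this
  have h4 : (k : ℝ) ≤ Real.log l := by
    have hwk : (k : ℝ) ≤ w := by
      have : (k:ℝ) * 1 ≤ (k:ℝ) * (2 * Real.pi) := by nlinarith
      rw [hw]; linarith
    linarith
  rw [div_lt_iff₀ hd] at hk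
  have h6 : (θ - δ - r) * Real.log l ≤ (θ - δ - r) * (k : ℝ) :=
    mul_le_mul_of_nonpos_left h4 (by linarith)
  nlinarith

/-- For `θ ∈ ℝ`, `δ > 0`, `0 < λ < 1`, the function `alphaOsc θ δ λ`
belongs to OR with `σ₀ = θ − δ` and `σ₁ = θ + δ`. -/
theorem stmt_6 (θ δ lam : ℝ) (hδ : 0 < δ) (hlam0 : 0 < lam) (hlam1 : lam < 1) :
    IsOR (alphaOsc θ δ lam) ∧
    sigma0 (alphaOsc θ δ lam) = θ - δ ∧
    sigma1 (alphaOsc θ δ lam) = θ + δ := by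
  obtain ⟨c₁, hc₁, hub⟩ := upper_mem (lam := lam) hδ hlam0 hlam1 one_pos
  obtain ⟨c₀, hc₀, hlb⟩ := lower_mem (lam := lam) hδ hlam0 hlam1 one_pos
  refine ⟨⟨?_, ?_, 2, one_lt_two, ?_⟩, ?_, ?_⟩
  · -- measurability
    have hg : Measurable fun t : ℝ => θ + δ * Real.sin (Real.log (Real.log t) ^ lam) := by
      measurability
    have hrepr : alphaOsc θ δ lam = fun t => if Real.exp 1 < t then
        Real.exp (Real.log t * (θ + δ * Real.sin (Real.log (Real.log t) ^ lam)))
        else t ^ θ := by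
      funext t; unfold alphaOsc; split_ifs with h
      · rw [Real.rpow_def_of_pos (lt_trans (Real.exp_pos 1) h)]
      · rfl
    have hmeas : Measurable (alphaOsc θ δ lam) := by
      rw [hrepr]
      refine Measurable.ite (measurableSet_lt measurable_const measurable_id) ?_ (by fun_prop)
      exact Real.measurable_exp.comp (Real.measurable_log.mul hg)
    exact hmeas.comp measurable_subtype_coe
  · intro t ht
    rw [alphaOsc_apply]
    exact Real.rpow_pos_of_pos (by linarith) _
  · -- ratio bounds with b = 2
    set M : ℝ := c₁ * 2 ^ |θ + δ + 1| with hM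
    set L : ℝ := c₀ * 2 ^ (-|θ - δ - 1|) with hL
    have hLpos : 0 < L := by positivity
    have hMpos : 0 < M := by positivity
    refine ⟨max 1 (max M L⁻¹), le_max_left _ _, ?_⟩
    intro t ht l hl hl2
    have hl0 : 0 < l := lt_of_lt_of_le one_pos hl
    have hcpos : (0:ℝ) < max 1 (max M L⁻¹) := lt_of_lt_of_le one_pos (le_max_left _ _)
    constructor
    · -- lower
      have h1 : (2:ℝ) ^ (-|θ - δ - 1|) ≤ l ^ (-|θ - δ - 1|) :=
        Real.rpow_le_rpow_of_nonpos hl0 hl2 (neg_nonpos.mpr (abs_nonneg _))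
      have h2 : l ^ (-|θ - δ - 1|) ≤ l ^ (θ - δ - 1) :=
        Real.rpow_le_rpow_of_exponent_le hl (neg_abs_le _)
      have h3 : L ≤ c₀ * l ^ (θ - δ - 1) := by
        rw [hL]
        exact mul_le_mul_of_nonneg_left (le_trans h1 h2) hc₀.le
      have h4 := hlb t ht l hl
      have h5 : (max 1 (max M L⁻¹))⁻¹ ≤ L := by
        have hge : L⁻¹ ≤ max 1 (max M L⁻¹) :=
          le_trans (le_max_right _ _) (le_max_right _ _)
        calc (max 1 (max M L⁻¹))⁻¹ ≤ (L⁻¹)⁻¹ :=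
              inv_anti₀ (by positivity) hge
          _ = L := inv_inv L
      linarith
    · -- upper
      have h1 : l ^ (θ + δ + 1) ≤ l ^ |θ + δ + 1| :=
        Real.rpow_le_rpow_of_exponent_le hl (le_abs_self _)
      have h2 : l ^ |θ + δ + 1| ≤ (2:ℝ) ^ |θ + δ + 1| :=
        Real.rpow_le_rpow (by linarith) hl2 (abs_nonneg _)
      have h3 : c₁ * l ^ (θ + δ + 1) ≤ M := by
        rw [hM]
        exact mul_le_mul_of_nonneg_left (le_trans h1 h2) hc₁.le
      have h4 := hub t ht l hl
      have h5 : M ≤ max 1 (max M L⁻¹) :=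
        le_trans (le_max_left _ _) (le_max_right _ _)
      linarith
  · -- sigma0
    apply csSup_eq_of_forall_le_of_forall_lt_exists_gt
    · exact ⟨θ - δ - 1, lower_mem hδ hlam0 hlam1 one_pos⟩
    · intro a ha
      exact lower_tight hδ hlam0 hlam1 ha
    · intro w hw
      refine ⟨θ - δ - (θ - δ - w) / 2, ?_, by linarith⟩
      exact lower_mem hδ hlam0 hlam1 (by linarith)
  · -- sigma1
    apply csInf_eq_of_forall_ge_of_forall_gt_exists_lt
    · exact ⟨θ + δ + 1, upper_mem hδ hlam0 hlam1 one_pos⟩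
    · intro a ha
      exact upper_tight hδ hlam0 hlam1 ha
    · intro w hw
      refine ⟨θ + δ + (w - (θ + δ)) / 2, ?_, by linarith⟩
      exact upper_mem hδ hlam0 hlam1 (by linarith)
end

section
/- Let θ ∈ ℝ, δ > 0, and λ > 1. Define α : [1,∞) → (0,∞) by α(t) = t^{θ + δ·sin((log log t)^λ)} if t > e, and α(t) = t^θ if 1 ≤ t ≤ e. Then α does not belong to OR; that is, for all numbers b > 1 and c ≥ 1 there exist t ≥ 1 and μ ∈ [1,b] such that α(μt)/α(t) < c⁻¹ or α(μt)/α(t) > c. -/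
/-- Chain estimate: if the ratio over steps in `[1,b]` is bounded by `c`, then
over `k` steps it is bounded by `c^k`. -/
lemma chainLemma (α : ℝ → ℝ) (b c : ℝ) (hb : 1 < b) (hc : 1 ≤ c)
    (hpos : ∀ t, 1 ≤ t → 0 < α t)
    (H : ∀ t, 1 ≤ t → ∀ l, 1 ≤ l → l ≤ b → α (l * t) / α t ≤ c) :
    ∀ k : ℕ, ∀ t s : ℝ, 1 ≤ t → t ≤ s → s ≤ b ^ k * t → α s ≤ c ^ k * α t := by
  intro k
  induction k with
  | zero =>
    intro t s ht hts hst
    simp only [pow_zero, one_mul] at hst ⊢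
    have : s = t := le_antisymm hst hts
    rw [this]
  | succ k ih =>
    intro t s ht hts hst
    by_cases hcase : s ≤ b ^ k * t
    · have h1 := ih t s ht hts hcase
      have h2 : (c : ℝ) ^ k ≤ c ^ (k + 1) := pow_le_pow_right₀ hc (by omega)
      have := (hpos t ht)
      nlinarith [pow_pos (lt_of_lt_of_le one_pos hc) k]
    · push_neg at hcase
      have hbk : (1:ℝ) ≤ b ^ k := one_le_pow₀ hb.le
      have ht' : 1 ≤ b ^ k * t := by nlinarith
      have ht'pos : 0 < b ^ k * t := by linarith
      set l := s / (b ^ k * t) with hl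
      have hl1 : 1 ≤ l := by
        rw [hl, le_div_iff₀ ht'pos]; linarith
      have hlb : l ≤ b := by
        rw [hl, div_le_iff₀ ht'pos]
        calc s ≤ b ^ (k+1) * t := hst
          _ = b * (b ^ k * t) := by ring
      have hls : l * (b ^ k * t) = s := div_mul_cancel₀ s (ne_of_gt ht'pos)
      have h1 := H (b ^ k * t) ht' l hl1 hlb
      rw [hls] at h1
      have hpt' := hpos _ ht'
      have h2 : α s ≤ c * α (b ^ k * t) := by
        rw [div_le_iff₀ hpt'] at h1; linarith
      have h3 := ih t (b ^ k * t) ht (by nlinarith) le_rfl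
      have hc0 : (0:ℝ) < c := lt_of_lt_of_le one_pos hc
      calc α s ≤ c * α (b ^ k * t) := h2
        _ ≤ c * (c ^ k * α t) := by nlinarith
        _ = c ^ (k+1) * α t := by ring

lemma alphaOsc_pos (θ δ lam t : ℝ) (ht : 1 ≤ t) : 0 < alphaOsc θ δ lam t := by
  unfold alphaOsc
  split <;> exact Real.rpow_pos_of_pos (by linarith) _

lemma alphaOsc_exp_exp (θ δ lam u : ℝ) (hu : 0 < u) :
    alphaOsc θ δ lam (Real.exp (Real.exp u))
      = Real.exp (Real.exp u) ^ (θ + δ * Real.sin (u ^ lam)) := by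
  unfold alphaOsc
  rw [if_pos (by rw [Real.exp_lt_exp]; exact Real.one_lt_exp_iff.mpr hu)]
  rw [Real.log_exp, Real.log_exp]

open Real in
/-- The key existence statement. -/
lemma keyLemma (θ δ lam : ℝ) (hδ : 0 < δ) (hlam : 1 < lam) :
    ∀ b : ℝ, 1 < b → ∀ c : ℝ, 1 ≤ c → ∃ t : ℝ, 1 ≤ t ∧ ∃ μ : ℝ, 1 ≤ μ ∧ μ ≤ b ∧
      (alphaOsc θ δ lam (μ * t) / alphaOsc θ δ lam t < c⁻¹ ∨
        c < alphaOsc θ δ lam (μ * t) / alphaOsc θ δ lam t) := by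
  intro b hb c hc
  by_contra hcon
  push_neg at hcon
  -- hcon : ∀ t, 1 ≤ t → ∀ μ, 1 ≤ μ → μ ≤ b → c⁻¹ ≤ r ∧ r ≤ c
  have Hup : ∀ t, 1 ≤ t → ∀ l, 1 ≤ l → l ≤ b →
      alphaOsc θ δ lam (l * t) / alphaOsc θ δ lam t ≤ c := by
    intro t ht l hl1 hlb
    exact (hcon t ht l hl1 hlb).2
  have hlogb : 0 < Real.log b := Real.log_pos hb
  have hlogc : 0 ≤ Real.log c := Real.log_nonneg hc
  set q : ℝ := Real.log c / Real.log b with hq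
  have hq0 : 0 ≤ q := div_nonneg hlogc hlogb.le
  set K : ℝ := |θ| + q with hK
  have hK0 : 0 ≤ K := add_nonneg (abs_nonneg _) hq0
  set R : ℝ := max (Real.exp 1 * π * K / δ) π with hR
  have hRpos : 0 < R := lt_of_lt_of_le Real.pi_pos (le_max_right _ _)
  set M : ℝ := max (max 1 (Real.log c / δ)) (R ^ ((lam - 1)⁻¹)) with hM
  have hM1 : 1 ≤ M := le_trans (le_max_left 1 _) (le_max_left _ _)
  have hMpos : 0 < M := lt_of_lt_of_le one_pos hM1
  set n : ℕ := ⌈M ^ lam⌉₊ + 1 with hn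
  set A : ℝ := 2 * π * n - π / 2 with hA
  set B : ℝ := 2 * π * n + π / 2 with hB
  have hMl : 0 < M ^ lam := Real.rpow_pos_of_pos hMpos lam
  have hnM : (M : ℝ) ^ lam ≤ n := by
    have := Nat.le_ceil (M ^ lam)
    push_cast [hn]
    linarith
  have hn1 : (1:ℝ) ≤ n := by
    have : (1:ℕ) ≤ n := by omega
    exact_mod_cast this
  have hpi : (3:ℝ) < π := by linarith [Real.pi_gt_three]
  have hAM : M ^ lam ≤ A := by
    rw [hA]; nlinarith
  have hA0 : 0 < A := lt_of_lt_of_le hMl hAM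
  have hAB : A < B := by rw [hA, hB]; linarith [Real.pi_pos]
  have hB0 : 0 < B := lt_trans hA0 hAB
  have hBA : B = A + π := by rw [hA, hB]; ring
  set u₁ : ℝ := A ^ (lam⁻¹) with hu₁
  set u₂ : ℝ := B ^ (lam⁻¹) with hu₂
  have hlam0 : 0 < lam := lt_trans one_pos hlam
  have hu₁pos : 0 < u₁ := Real.rpow_pos_of_pos hA0 _
  have hu₂pos : 0 < u₂ := Real.rpow_pos_of_pos hB0 _
  have hu12 : u₁ < u₂ := Real.rpow_lt_rpow hA0.le hAB (by positivity)
  have hu₁M : M ≤ u₁ := by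
    have h1 : (M ^ lam) ^ (lam⁻¹) ≤ u₁ :=
      Real.rpow_le_rpow hMl.le hAM (by positivity)
    rwa [← Real.rpow_mul hMpos.le, mul_inv_cancel₀ (ne_of_gt hlam0),
      Real.rpow_one] at h1
  have hu₁1 : 1 ≤ u₁ := le_trans hM1 hu₁M
  have hu₁A : u₁ ^ lam = A := by
    rw [hu₁, ← Real.rpow_mul hA0.le, inv_mul_cancel₀ (ne_of_gt hlam0), Real.rpow_one]
  have hu₂B : u₂ ^ lam = B := by
    rw [hu₂, ← Real.rpow_mul hB0.le, inv_mul_cancel₀ (ne_of_gt hlam0), Real.rpow_one]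
  -- sine values
  have hsinA : Real.sin A = -1 := by
    have : A = -(π/2) + (n : ℕ) * (2 * π) := by rw [hA]; push_cast; ring
    rw [this, Real.sin_add_nat_mul_two_pi, Real.sin_neg, Real.sin_pi_div_two]
  have hsinB : Real.sin B = 1 := by
    have : B = (π/2) + (n : ℕ) * (2 * π) := by rw [hB]; push_cast; ring
    rw [this, Real.sin_add_nat_mul_two_pi, Real.sin_pi_div_two]
  -- the two points
  set t₁ : ℝ := Real.exp (Real.exp u₁) with ht₁
  set t₂ : ℝ := Real.exp (Real.exp u₂) with ht₂
  have ht₁1 : 1 ≤ t₁ := Real.one_le_exp (Real.exp_pos _).le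
  have ht₂1 : 1 ≤ t₂ := Real.one_le_exp (Real.exp_pos _).le
  have ht₁pos : 0 < t₁ := Real.exp_pos _
  have ht₂pos : 0 < t₂ := Real.exp_pos _
  have hval₁ : alphaOsc θ δ lam t₁ = t₁ ^ (θ - δ) := by
    rw [ht₁, alphaOsc_exp_exp θ δ lam u₁ hu₁pos, hu₁A, hsinA]; ring_nf
  have hval₂ : alphaOsc θ δ lam t₂ = t₂ ^ (θ + δ) := by
    rw [ht₂, alphaOsc_exp_exp θ δ lam u₂ hu₂pos, hu₂B, hsinB]; ring_nf
  set D : ℝ := Real.exp u₂ - Real.exp u₁ with hD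
  have hD0 : 0 ≤ D := by
    rw [hD]; linarith [Real.exp_lt_exp.mpr hu12]
  set k : ℕ := ⌈D / Real.log b⌉₊ with hk
  have hkD : D ≤ k * Real.log b := by
    have h1 : D / Real.log b ≤ k := Nat.le_ceil _
    rw [div_le_iff₀ hlogb] at h1
    linarith
  have hkub : (k : ℝ) ≤ D / Real.log b + 1 := by
    have := Nat.ceil_lt_add_one (show (0:ℝ) ≤ D / Real.log b from div_nonneg hD0 hlogb.le)
    exact le_of_lt this
  have ht12 : t₁ ≤ t₂ := by
    rw [ht₁, ht₂, Real.exp_le_exp]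
    exact (Real.exp_le_exp.mpr hu12.le)
  have hbk : t₂ ≤ b ^ k * t₁ := by
    have hbpos : (0:ℝ) < b := lt_trans one_pos hb
    have h1 : (b:ℝ) ^ k = Real.exp (k * Real.log b) := by
      rw [← Real.log_pow, Real.exp_log (pow_pos hbpos k)]
    rw [h1, ht₂, ht₁, ← Real.exp_add]
    apply Real.exp_le_exp.mpr
    rw [hD] at hkD; linarith
  -- apply the chain lemma
  have hchain := chainLemma (alphaOsc θ δ lam) b c hb hc
    (fun t ht => alphaOsc_pos θ δ lam t ht) Hup k t₁ t₂ ht₁1 ht12 hbk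
  -- take logarithms
  have hckpos : 0 < (c:ℝ) ^ k := pow_pos (lt_of_lt_of_le one_pos hc) k
  have hαt₁pos : 0 < alphaOsc θ δ lam t₁ := alphaOsc_pos θ δ lam t₁ ht₁1
  have hαt₂pos : 0 < alphaOsc θ δ lam t₂ := alphaOsc_pos θ δ lam t₂ ht₂1
  have hlog : Real.log (alphaOsc θ δ lam t₂) ≤ k * Real.log c + Real.log (alphaOsc θ δ lam t₁) := by
    have := Real.log_le_log hαt₂pos hchain
    rwa [Real.log_mul (ne_of_gt hckpos) (ne_of_gt hαt₁pos), Real.log_pow] at this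
  rw [hval₁, hval₂, Real.log_rpow ht₂pos, Real.log_rpow ht₁pos, ht₁, ht₂,
    Real.log_exp, Real.log_exp] at hlog
  -- hlog : (θ + δ) * exp u₂ ≤ k * log c + (θ - δ) * exp u₁
  -- now the analytic estimates
  have he1 : (0:ℝ) < Real.exp 1 := Real.exp_pos 1
  -- Bernoulli: u₂ - u₁ ≤ π * u₁ ^ (1 - lam)
  have hupow : 0 < u₁ ^ (lam - 1) := Real.rpow_pos_of_pos hu₁pos _
  have hBern : lam * ((u₂ - u₁) * u₁ ^ (lam - 1)) ≤ π := by
    have hs : (0:ℝ) ≤ u₂ / u₁ - 1 := by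
      rw [sub_nonneg, le_div_iff₀ hu₁pos, one_mul]; exact hu12.le
    have h1 := one_add_mul_self_le_rpow_one_add (by linarith : (-1:ℝ) ≤ u₂/u₁ - 1) hlam.le
    have h2 : (1 + (u₂/u₁ - 1)) ^ lam = u₂ ^ lam / u₁ ^ lam := by
      rw [show 1 + (u₂/u₁ - 1) = u₂ / u₁ by ring, Real.div_rpow hu₂pos.le hu₁pos.le]
    rw [h2, hu₁A, hu₂B, hBA] at h1
    -- h1 : 1 + lam * (u₂/u₁ - 1) ≤ (A + π) / A
    have hsub : u₂/u₁ - 1 = (u₂ - u₁)/u₁ := by field_simp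
    rw [hsub] at h1
    have h3 : A * (1 + lam * ((u₂ - u₁)/u₁)) ≤ A + π := by
      rw [mul_comm, ← le_div_iff₀ hA0]; exact h1
    have hexp : A * (1 + lam * ((u₂ - u₁)/u₁)) = A + lam * ((u₂ - u₁)/u₁) * A := by ring
    rw [hexp] at h3
    have h4 : lam * ((u₂ - u₁)/u₁) * A ≤ π := by linarith
    have h5 : u₁ ^ (lam - 1) = A / u₁ := by
      rw [show lam - 1 = lam + (-1) by ring, Real.rpow_add hu₁pos, Real.rpow_neg_one, hu₁A]
      ring
    rw [h5]
    calc lam * ((u₂ - u₁) * (A / u₁)) = lam * ((u₂ - u₁)/u₁) * A := by ring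
      _ ≤ π := h4
  have hinv : u₁ ^ (1 - lam) = (u₁ ^ (lam - 1))⁻¹ := by
    rw [show (1:ℝ) - lam = -(lam - 1) by ring, Real.rpow_neg hu₁pos.le]
  have hBern' : u₂ - u₁ ≤ π * u₁ ^ (1 - lam) := by
    have h6 : (u₂ - u₁) * u₁ ^ (lam - 1) ≤ π := by
      have hy : 0 ≤ (u₂ - u₁) * u₁ ^ (lam - 1) :=
        mul_nonneg (sub_nonneg.mpr hu12.le) hupow.le
      have := le_mul_of_one_le_left hy hlam.le
      linarith
    rw [hinv, ← div_eq_mul_inv, le_div_iff₀ hupow]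
    exact h6
  -- u₁ ^ (lam - 1) ≥ R
  have hu₁R : R ≤ u₁ ^ (lam - 1) := by
    have h0 : R ^ ((lam - 1)⁻¹) ≤ M := le_max_right _ _
    have h1 : R ^ ((lam - 1)⁻¹) ≤ u₁ := le_trans h0 hu₁M
    have h2 : (R ^ ((lam - 1)⁻¹)) ^ (lam - 1) ≤ u₁ ^ (lam - 1) :=
      Real.rpow_le_rpow (Real.rpow_nonneg hRpos.le _) h1 (by linarith)
    rwa [← Real.rpow_mul hRpos.le, inv_mul_cancel₀ (by linarith : lam - 1 ≠ 0),
      Real.rpow_one] at h2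
  have hstep1 : π * u₁ ^ (1 - lam) ≤ 1 := by
    rw [hinv, ← div_eq_mul_inv, div_le_one hupow]
    exact le_trans (le_max_right _ _) hu₁R
  have hδu : u₂ - u₁ ≤ 1 := le_trans hBern' hstep1
  -- D ≤ e * π * u₁^(1-lam) * exp u₁
  have hDbound : D ≤ Real.exp 1 * (π * u₁ ^ (1 - lam)) * Real.exp u₁ := by
    have h1 : Real.exp u₂ - Real.exp u₁ ≤ Real.exp u₂ * (u₂ - u₁) := by
      have h2 : 1 - (u₂ - u₁) ≤ Real.exp (-(u₂ - u₁)) := by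
        linarith [Real.add_one_le_exp (-(u₂ - u₁))]
      have h3 : Real.exp u₂ * Real.exp (-(u₂-u₁)) = Real.exp u₁ := by
        rw [← Real.exp_add]; ring_nf
      have h4 := mul_le_mul_of_nonneg_left h2 (Real.exp_pos u₂).le
      rw [h3] at h4
      have h5 : Real.exp u₂ * (1 - (u₂ - u₁))
          = Real.exp u₂ - Real.exp u₂ * (u₂ - u₁) := by ring
      rw [h5] at h4
      linarith
    have h4 : Real.exp u₂ ≤ Real.exp 1 * Real.exp u₁ := by
      rw [← Real.exp_add]
      exact Real.exp_le_exp.mpr (by linarith)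
    have h5 : Real.exp u₂ * (u₂ - u₁) ≤ Real.exp 1 * Real.exp u₁ * (u₂ - u₁) :=
      mul_le_mul_of_nonneg_right h4 (sub_nonneg.mpr hu12.le)
    rw [hD]
    calc Real.exp u₂ - Real.exp u₁ ≤ Real.exp u₂ * (u₂ - u₁) := h1
      _ ≤ Real.exp 1 * Real.exp u₁ * (u₂ - u₁) := h5
      _ ≤ Real.exp 1 * Real.exp u₁ * (π * u₁ ^ (1 - lam)) :=
          mul_le_mul_of_nonneg_left hBern'
            (by positivity)
      _ = Real.exp 1 * (π * u₁ ^ (1 - lam)) * Real.exp u₁ := by ring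
  -- K * (e * π * u₁^(1-lam)) ≤ δ
  have hKbound : K * (Real.exp 1 * (π * u₁ ^ (1 - lam))) ≤ δ := by
    have h0 : Real.exp 1 * π * K / δ ≤ u₁ ^ (lam - 1) :=
      le_trans (le_max_left _ _) hu₁R
    rw [hinv]
    rw [div_le_iff₀ hδ] at h0
    have h1 : K * (Real.exp 1 * π) ≤ δ * u₁ ^ (lam - 1) := by linarith
    rw [show K * (Real.exp 1 * (π * (u₁ ^ (lam-1))⁻¹)) = (K * (Real.exp 1 * π)) / (u₁ ^ (lam-1)) by
      field_simp]
    rw [div_le_iff₀ hupow]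
    linarith
  -- δ * exp u₁ > log c
  have hlogcu : Real.log c ≤ δ * u₁ := by
    have h0 : Real.log c / δ ≤ M := le_trans (le_max_right _ _) (le_max_left _ _)
    have h1 : Real.log c / δ ≤ u₁ := le_trans h0 hu₁M
    rw [div_le_iff₀ hδ] at h1; linarith
  have hexpu : u₁ < Real.exp u₁ := by linarith [Real.add_one_le_exp u₁]
  -- assemble the contradiction
  have hKD : K * D ≤ δ * Real.exp u₁ := by
    calc K * D ≤ K * (Real.exp 1 * (π * u₁ ^ (1 - lam)) * Real.exp u₁) :=
          mul_le_mul_of_nonneg_left hDbound hK0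
      _ = K * (Real.exp 1 * (π * u₁ ^ (1 - lam))) * Real.exp u₁ := by ring
      _ ≤ δ * Real.exp u₁ := mul_le_mul_of_nonneg_right hKbound (Real.exp_pos u₁).le
  have habs : -|θ| ≤ θ ∧ θ ≤ |θ| := ⟨neg_abs_le θ, le_abs_self θ⟩
  have hfinal : (θ + δ) * Real.exp u₂ - (θ - δ) * Real.exp u₁ > (D / Real.log b + 1) * Real.log c := by
    have hqD : D / Real.log b * Real.log c = q * D := by
      rw [hq]; field_simp
    have hLHS : (θ + δ) * Real.exp u₂ - (θ - δ) * Real.exp u₁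
        = θ * D + δ * (Real.exp u₂ + Real.exp u₁) := by rw [hD]; ring
    have hS : 2 * Real.exp u₁ ≤ Real.exp u₂ + Real.exp u₁ := by
      linarith [Real.exp_le_exp.mpr hu12.le]
    have hθD : -(|θ| * D) ≤ θ * D := by
      have := mul_le_mul_of_nonneg_right habs.1 hD0
      linarith
    have hδexp : Real.log c < δ * Real.exp u₁ := by
      have := mul_lt_mul_of_pos_left hexpu hδ
      linarith
    have hKexp : K * D = |θ| * D + q * D := by rw [hK]; ring
    have hSδ : δ * (2 * Real.exp u₁) ≤ δ * (Real.exp u₂ + Real.exp u₁) :=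
      mul_le_mul_of_nonneg_left hS hδ.le
    rw [hLHS, add_mul, one_mul, hqD]
    -- goal: q * D + log c < θ * D + δ * (exp u₂ + exp u₁)
    linarith [hKD, hθD, hδexp, hKexp, hSδ]
  -- contradiction with hlog
  have hklog : (k : ℝ) * Real.log c ≤ (D / Real.log b + 1) * Real.log c :=
    mul_le_mul_of_nonneg_right hkub hlogc
  linarith

/-- For `θ ∈ ℝ`, `δ > 0` and `λ > 1`, the function `alphaOsc θ δ λ` does
not belong to OR: for all `b > 1` and `c ≥ 1` there are `t ≥ 1` and `μ ∈ [1,b]` with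
`α(μt)/α(t) < c⁻¹` or `α(μt)/α(t) > c`. -/
theorem stmt_8 (θ δ lam : ℝ) (hδ : 0 < δ) (hlam : 1 < lam) :
    ¬ IsOR (alphaOsc θ δ lam) ∧
    ∀ b : ℝ, 1 < b → ∀ c : ℝ, 1 ≤ c → ∃ t : ℝ, 1 ≤ t ∧ ∃ μ : ℝ, 1 ≤ μ ∧ μ ≤ b ∧
      (alphaOsc θ δ lam (μ * t) / alphaOsc θ δ lam t < c⁻¹ ∨
        c < alphaOsc θ δ lam (μ * t) / alphaOsc θ δ lam t) := by
  refine ⟨?_, keyLemma θ δ lam hδ hlam⟩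
  rintro ⟨-, -, b, hb, c, hc, H⟩
  obtain ⟨t, ht, μ, hμ1, hμb, hor⟩ := keyLemma θ δ lam hδ hlam b hb c hc
  obtain ⟨h1, h2⟩ := H t ht μ hμ1 hμb
  rcases hor with h | h <;> linarith
end

section
/- Let n ≥ 1 be an integer, s ∈ ℝ, and α ∈ OR, and suppose that ∫₁^∞ α²(t)/t^{2s+1} dt < ∞. Then there exists a constant c > 0 such that for every measurable function v : ℝⁿ → ℂ one has ∫_{ℝⁿ} α²(⟨ξ⟩)·|v(ξ)|² dξ ≤ c · sup_{k ≥ 0} ( 4^{sk} · ∫_{Q_k} |v(ξ)|² dξ ), where the supremum is over all integers k ≥ 0 and both sides are interpreted in [0,∞]. -/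
open MeasureTheory

/-- The smoothed norm `⟨ξ⟩ = (1 + |ξ|²)^{1/2}` on `ℝⁿ`. -/
noncomputable def smoothNorm {n : ℕ} (ξ : EuclideanSpace ℝ (Fin n)) : ℝ :=
  Real.sqrt (1 + ‖ξ‖ ^ 2)

/-- The dyadic annuli `Q₀ = {|ξ| ≤ 1}` and `Q_k = {2^{k−1} < |ξ| ≤ 2ᵏ}` for `k ≥ 1`. -/
def dyadicAnnulus (n k : ℕ) : Set (EuclideanSpace ℝ (Fin n)) :=
  if k = 0 then {ξ | ‖ξ‖ ≤ 1}
  else {ξ | (2:ℝ) ^ (k - 1) < ‖ξ‖ ∧ ‖ξ‖ ≤ (2:ℝ) ^ k}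

/-- Iterated O-regular variation bound. -/
lemma or_iter (α : ℝ → ℝ) (hpos : ∀ t, 1 ≤ t → 0 < α t) (b c0 : ℝ) (hb : 1 < b) (hc : 1 ≤ c0)
    (hOR : ∀ t, 1 ≤ t → ∀ l, 1 ≤ l → l ≤ b → c0⁻¹ ≤ α (l * t) / α t ∧ α (l * t) / α t ≤ c0) :
    ∀ m : ℕ, ∀ t, 1 ≤ t → ∀ l, 1 ≤ l → l ≤ b ^ m →
      α t ≤ c0 ^ m * α (l * t) ∧ α (l * t) ≤ c0 ^ m * α t := by
  intro m
  induction m with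
  | zero =>
    intro t ht l hl1 hlb
    have : l = 1 := le_antisymm (by simpa using hlb) hl1
    subst this
    simp
  | succ m IH =>
    intro t ht l hl1 hlb
    have hc0 : (0:ℝ) < c0 := lt_of_lt_of_le one_pos hc
    have hlt : (1:ℝ) ≤ l * t := one_le_mul_of_one_le_of_one_le hl1 ht
    have hαt : 0 < α t := hpos t ht
    have hαlt : 0 < α (l * t) := hpos _ hlt
    by_cases hl : l ≤ b ^ m
    · obtain ⟨h1, h2⟩ := IH t ht l hl1 hl
      have hcm : c0 ^ m ≤ c0 ^ (m + 1) := pow_le_pow_right₀ hc (Nat.le_succ m)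
      constructor
      · exact h1.trans (mul_le_mul_of_nonneg_right hcm hαlt.le)
      · exact h2.trans (mul_le_mul_of_nonneg_right hcm hαt.le)
    · push_neg at hl
      have hbm1 : (1:ℝ) ≤ b ^ m := one_le_pow₀ hb.le
      have hbm0 : (0:ℝ) < b ^ m := lt_of_lt_of_le one_pos hbm1
      set l' := l / b ^ m with hl'def
      have hl'1 : 1 ≤ l' := (one_le_div hbm0).2 hl.le
      have hl'b : l' ≤ b := by
        rw [div_le_iff₀ hbm0]
        calc l ≤ b ^ (m + 1) := hlb
        _ = b * b ^ m := by ring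
      have ht' : (1:ℝ) ≤ b ^ m * t := one_le_mul_of_one_le_of_one_le hbm1 ht
      have hαt' : 0 < α (b ^ m * t) := hpos _ ht'
      have hre : l * t = l' * (b ^ m * t) := by
        have h := div_mul_cancel₀ l hbm0.ne'
        calc l * t = l / b ^ m * b ^ m * t := by rw [h]
        _ = l' * (b ^ m * t) := by rw [hl'def]; ring
      obtain ⟨h1, h2⟩ := IH t ht (b ^ m) hbm1 le_rfl
      obtain ⟨g1, g2⟩ := hOR (b ^ m * t) ht' l' hl'1 hl'b
      have g2' : α (l' * (b ^ m * t)) ≤ c0 * α (b ^ m * t) := by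
        rw [div_le_iff₀ hαt'] at g2; linarith
      have g1' : α (b ^ m * t) ≤ c0 * α (l' * (b ^ m * t)) := by
        rw [le_div_iff₀ hαt'] at g1
        have := mul_le_mul_of_nonneg_left g1 hc0.le
        calc α (b ^ m * t) = c0 * (c0⁻¹ * α (b ^ m * t)) := by field_simp
        _ ≤ c0 * α (l' * (b ^ m * t)) := this
      rw [hre]
      constructor
      · calc α t ≤ c0 ^ m * α (b ^ m * t) := h1
          _ ≤ c0 ^ m * (c0 * α (l' * (b ^ m * t))) :=
              mul_le_mul_of_nonneg_left g1' (by positivity)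
          _ = c0 ^ (m + 1) * α (l' * (b ^ m * t)) := by ring
      · calc α (l' * (b ^ m * t)) ≤ c0 * α (b ^ m * t) := g2'
          _ ≤ c0 * (c0 ^ m * α t) := mul_le_mul_of_nonneg_left h2 hc0.le
          _ = c0 ^ (m + 1) * α t := by ring

/-- Two points of `[1,∞)` within a factor of `2` have comparable `α`-values. -/
lemma or_comp (α : ℝ → ℝ) (hpos : ∀ t, 1 ≤ t → 0 < α t) (b c0 : ℝ) (hb : 1 < b) (hc : 1 ≤ c0)
    (hOR : ∀ t, 1 ≤ t → ∀ l, 1 ≤ l → l ≤ b → c0⁻¹ ≤ α (l * t) / α t ∧ α (l * t) / α t ≤ c0) :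
    ∃ C : ℝ, 1 ≤ C ∧ ∀ t r, 1 ≤ t → t ≤ r → r ≤ 2 * t → α r ≤ C * α t ∧ α t ≤ C * α r := by
  obtain ⟨m, hm⟩ := pow_unbounded_of_one_lt (2:ℝ) hb
  refine ⟨c0 ^ m, one_le_pow₀ hc, fun t r ht htr hr2 => ?_⟩
  have ht0 : (0:ℝ) < t := lt_of_lt_of_le one_pos ht
  have hl1 : 1 ≤ r / t := (one_le_div ht0).2 htr
  have hlb : r / t ≤ b ^ m := by
    refine le_trans ?_ hm.le
    rw [div_le_iff₀ ht0]; linarith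
  have := or_iter α hpos b c0 hb hc hOR m t ht (r / t) hl1 hlb
  rw [div_mul_cancel₀ r (ne_of_gt ht0)] at this
  exact ⟨this.2, this.1⟩

lemma annulus_norm_le {n k : ℕ} {ξ : EuclideanSpace ℝ (Fin n)}
    (hξ : ξ ∈ dyadicAnnulus n k) : ‖ξ‖ ≤ (2:ℝ) ^ k := by
  unfold dyadicAnnulus at hξ
  split_ifs at hξ with h
  · subst h; simpa using hξ
  · exact hξ.2

lemma annulus_meas (n k : ℕ) : MeasurableSet (dyadicAnnulus n k) := by
  unfold dyadicAnnulus
  split_ifs with h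
  · exact measurableSet_le measurable_norm measurable_const
  · exact MeasurableSet.inter
      (measurableSet_lt measurable_const measurable_norm)
      (measurableSet_le measurable_norm measurable_const)

lemma annulus_disj (n : ℕ) : Pairwise (Function.onFun Disjoint (dyadicAnnulus n)) := by
  have key : ∀ j k : ℕ, j < k → Disjoint (dyadicAnnulus n j) (dyadicAnnulus n k) := by
    intro j k hjk
    rw [Set.disjoint_left]
    intro ξ hj hk
    have h1 : ‖ξ‖ ≤ (2:ℝ) ^ j := annulus_norm_le hj
    have hk0 : k ≠ 0 := by omega
    have h2 : (2:ℝ) ^ (k - 1) < ‖ξ‖ := by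
      unfold dyadicAnnulus at hk
      rw [if_neg hk0] at hk
      exact hk.1
    have : (2:ℝ) ^ j ≤ (2:ℝ) ^ (k - 1) := pow_le_pow_right₀ one_le_two (by omega)
    linarith
  intro j k hjk
  rcases hjk.lt_or_gt with h | h
  · exact key _ _ h
  · exact (key _ _ h).symm

lemma annulus_union (n : ℕ) : (⋃ k, dyadicAnnulus n k) = Set.univ := by
  classical
  ext ξ
  simp only [Set.mem_iUnion, Set.mem_univ, iff_true]
  by_cases h : ‖ξ‖ ≤ 1
  · exact ⟨0, by simp [dyadicAnnulus, h]⟩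
  · push_neg at h
    have hex : ∃ m : ℕ, ‖ξ‖ ≤ (2:ℝ) ^ m :=
      (pow_unbounded_of_one_lt ‖ξ‖ one_lt_two).imp fun m hm => hm.le
    set k := Nat.find hex with hkdef
    have hspec : ‖ξ‖ ≤ (2:ℝ) ^ k := Nat.find_spec hex
    have hk0 : k ≠ 0 := by
      intro h0
      rw [h0] at hspec
      simp at hspec
      linarith
    have hmin : ¬ (‖ξ‖ ≤ (2:ℝ) ^ (k - 1)) := Nat.find_min hex (by omega)
    push_neg at hmin
    exact ⟨k, by simp only [dyadicAnnulus, if_neg hk0]; exact ⟨hmin, hspec⟩⟩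

lemma smoothNorm_one_le {n : ℕ} (ξ : EuclideanSpace ℝ (Fin n)) : 1 ≤ smoothNorm ξ := by
  rw [show (1:ℝ) = Real.sqrt 1 from Real.sqrt_one.symm]
  exact Real.sqrt_le_sqrt (by nlinarith [sq_nonneg ‖ξ‖])

lemma annulus_smoothNorm {n k : ℕ} {ξ : EuclideanSpace ℝ (Fin n)}
    (hξ : ξ ∈ dyadicAnnulus n k) :
    ((2:ℝ) ^ k ≤ smoothNorm ξ ∧ smoothNorm ξ ≤ 2 * 2 ^ k) ∨
      (smoothNorm ξ ≤ (2:ℝ) ^ k ∧ (2:ℝ) ^ k ≤ 2 * smoothNorm ξ) := by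
  have hnorm : ‖ξ‖ ≤ (2:ℝ) ^ k := annulus_norm_le hξ
  have hP1 : (1:ℝ) ≤ (2:ℝ) ^ k := one_le_pow₀ one_le_two
  have hub : smoothNorm ξ ≤ 2 * 2 ^ k := by
    have h1 : 1 + ‖ξ‖ ^ 2 ≤ (2 * 2 ^ k) ^ 2 := by nlinarith [norm_nonneg ξ]
    calc smoothNorm ξ ≤ Real.sqrt ((2 * 2 ^ k) ^ 2) := Real.sqrt_le_sqrt h1
      _ = 2 * 2 ^ k := Real.sqrt_sq (by positivity)
  have hg1 : 1 ≤ smoothNorm ξ := smoothNorm_one_le ξ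
  rcases le_total ((2:ℝ) ^ k) (smoothNorm ξ) with h | h
  · exact Or.inl ⟨h, hub⟩
  · refine Or.inr ⟨h, ?_⟩
    rcases Nat.eq_zero_or_pos k with rfl | hk
    · simp only [pow_zero]; linarith
    · have hlow : (2:ℝ) ^ (k - 1) < ‖ξ‖ := by
        unfold dyadicAnnulus at hξ
        rw [if_neg (by omega)] at hξ
        exact hξ.1
      have hgnorm : ‖ξ‖ ≤ smoothNorm ξ := by
        calc ‖ξ‖ = Real.sqrt (‖ξ‖ ^ 2) := (Real.sqrt_sq (norm_nonneg ξ)).symm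
          _ ≤ smoothNorm ξ := Real.sqrt_le_sqrt (by nlinarith)
      have hpk : (2:ℝ) ^ k = 2 * (2:ℝ) ^ (k - 1) := by
        rw [← pow_succ']
        congr 1
        omega
      rw [hpk]
      nlinarith

/-- If `α ∈ OR` and `∫₁^∞ α²(t)/t^{2s+1} dt < ∞`, then there is `c > 0`
such that for every measurable `v : ℝⁿ → ℂ`,
`∫_{ℝⁿ} α²(⟨ξ⟩)|v(ξ)|² dξ ≤ c · sup_k (4^{sk} ∫_{Q_k} |v(ξ)|² dξ)` in `[0,∞]`. -/
theorem stmt_12 (n : ℕ) (hn : 1 ≤ n) (s : ℝ) (α : ℝ → ℝ) (hα : IsOR α)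
    (hint : (∫⁻ t in Set.Ici (1:ℝ), ENNReal.ofReal (α t ^ 2 / t ^ (2 * s + 1))) < ⊤) :
    ∃ c : ℝ, 0 < c ∧ ∀ v : EuclideanSpace ℝ (Fin n) → ℂ, Measurable v →
      (∫⁻ ξ, ENNReal.ofReal (α (smoothNorm ξ) ^ 2 * ‖v ξ‖ ^ 2)) ≤
        ENNReal.ofReal c *
          ⨆ k : ℕ, ENNReal.ofReal ((4:ℝ) ^ (s * (k:ℝ))) *
            ∫⁻ ξ in dyadicAnnulus n k, ENNReal.ofReal (‖v ξ‖ ^ 2) := by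
  classical
  obtain ⟨hmeas, hpos, b, hb, c0, hc0, hOR⟩ := hα
  obtain ⟨C, hC1, hC⟩ := or_comp α hpos b c0 hb hc0 hOR
  have hC0 : (0:ℝ) < C := lt_of_lt_of_le one_pos hC1
  set e : ℝ := 2 * s + 1 with hedef
  set κ : ℝ := (max 1 ((2:ℝ) ^ e))⁻¹ with hκdef
  have hmax0 : (0:ℝ) < max 1 ((2:ℝ) ^ e) := lt_of_lt_of_le one_pos (le_max_left _ _)
  have hκ0 : 0 < κ := by rw [hκdef]; exact inv_pos.2 hmax0
  set T := ∫⁻ t in Set.Ici (1:ℝ), ENNReal.ofReal (α t ^ 2 / t ^ e) with hTdef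
  have hTne : T ≠ ⊤ := hint.ne
  -- the dyadic intervals on the real line
  set I : ℕ → ENNReal := fun k =>
    ∫⁻ t in Set.Ico ((2:ℝ) ^ k) ((2:ℝ) ^ (k + 1)), ENNReal.ofReal (α t ^ 2 / t ^ e) with hIdef
  -- Step 3: pointwise lower bound on the line integral
  have key3 : ∀ k : ℕ, ENNReal.ofReal (α ((2:ℝ) ^ k) ^ 2 * κ / C ^ 2) ≤
      ENNReal.ofReal ((4:ℝ) ^ (s * (k:ℝ))) * I k := by
    intro k
    set P : ℝ := (2:ℝ) ^ k with hPdef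
    have hP1 : (1:ℝ) ≤ P := one_le_pow₀ one_le_two
    have hP0 : (0:ℝ) < P := lt_of_lt_of_le one_pos hP1
    have hαP : 0 < α P := hpos P hP1
    -- constant lower bound for the integrand on [P, 2P)
    have hptwise : ∀ t ∈ Set.Ico P ((2:ℝ) ^ (k + 1)),
        α P ^ 2 / C ^ 2 * κ * P ^ (-e) ≤ α t ^ 2 / t ^ e := by
      intro t ht
      obtain ⟨ht1, ht2⟩ := ht
      have h2P : (2:ℝ) ^ (k + 1) = 2 * P := by rw [hPdef, pow_succ]; ring
      have ht1' : (1:ℝ) ≤ t := le_trans hP1 ht1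
      have ht0 : (0:ℝ) < t := lt_of_lt_of_le one_pos ht1'
      have hcomp := hC P t hP1 ht1 (by rw [h2P] at ht2; linarith)
      have hα2 : α P ^ 2 / C ^ 2 ≤ α t ^ 2 := by
        have h := hcomp.2
        have hαt := hpos t ht1'
        rw [div_le_iff₀ (by positivity)]
        nlinarith
      have hte : t ^ e ≤ P ^ e * max 1 ((2:ℝ) ^ e) := by
        have hu : t = P * (t / P) := by field_simp
        have hu1 : (1:ℝ) ≤ t / P := (one_le_div hP0).2 ht1
        have hu2 : t / P ≤ 2 := by
          rw [div_le_iff₀ hP0]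
          rw [h2P] at ht2
          linarith
        have : t ^ e = P ^ e * (t / P) ^ e := by
          rw [hu, Real.mul_rpow hP0.le (by linarith)]
          congr 2
          field_simp
        rw [this]
        refine mul_le_mul_of_nonneg_left ?_ (Real.rpow_nonneg hP0.le e)
        rcases le_or_gt 0 e with he | he
        · exact le_trans (Real.rpow_le_rpow (by linarith) hu2 he) (le_max_right _ _)
        · exact le_trans (Real.rpow_le_one_of_one_le_of_nonpos hu1 he.le) (le_max_left _ _)
      have hPe0 : (0:ℝ) < P ^ e := Real.rpow_pos_of_pos hP0 e
      have hte0 : (0:ℝ) < t ^ e := Real.rpow_pos_of_pos ht0 e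
      rw [le_div_iff₀ hte0]
      have hPee : P ^ (-e) * P ^ e = 1 := by
        rw [← Real.rpow_add hP0]; simp
      have hκM : κ * max 1 ((2:ℝ) ^ e) = 1 := inv_mul_cancel₀ hmax0.ne'
      calc α P ^ 2 / C ^ 2 * κ * P ^ (-e) * t ^ e
          ≤ α P ^ 2 / C ^ 2 * κ * P ^ (-e) * (P ^ e * max 1 ((2:ℝ) ^ e)) := by
            refine mul_le_mul_of_nonneg_left hte ?_
            have : (0:ℝ) ≤ P ^ (-e) := (Real.rpow_pos_of_pos hP0 _).le
            positivity
        _ = α P ^ 2 / C ^ 2 * (κ * max 1 ((2:ℝ) ^ e)) * (P ^ (-e) * P ^ e) := by ring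
        _ = α P ^ 2 / C ^ 2 := by rw [hPee, hκM]; ring
        _ ≤ α t ^ 2 := hα2
    -- lower bound the integral by the constant
    have hIlow : ENNReal.ofReal (α P ^ 2 / C ^ 2 * κ * P ^ (-e)) * ENNReal.ofReal P ≤ I k := by
      have h2P : (2:ℝ) ^ (k + 1) = 2 * P := by rw [hPdef, pow_succ]; ring
      have hvol : volume (Set.Ico P ((2:ℝ) ^ (k + 1))) = ENNReal.ofReal P := by
        rw [Real.volume_Ico, h2P]
        congr 1
        ring
      calc ENNReal.ofReal (α P ^ 2 / C ^ 2 * κ * P ^ (-e)) * ENNReal.ofReal P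
          = ∫⁻ _ in Set.Ico P ((2:ℝ) ^ (k + 1)),
              ENNReal.ofReal (α P ^ 2 / C ^ 2 * κ * P ^ (-e)) := by
            rw [setLIntegral_const, hvol]
        _ ≤ I k := by
            rw [hIdef]
            exact setLIntegral_mono' measurableSet_Ico
              (fun t ht => ENNReal.ofReal_le_ofReal (hptwise t ht))
    -- exponent bookkeeping : 4^(sk) * (P^(-e) * P) = 1
    have hexp : (4:ℝ) ^ (s * (k:ℝ)) * (P ^ (-e) * P) = 1 := by
      have h4 : (4:ℝ) = (2:ℝ) ^ ((2:ℕ):ℝ) := by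
        rw [Real.rpow_natCast]; norm_num
      have hPr : P = (2:ℝ) ^ ((k:ℕ):ℝ) := by rw [Real.rpow_natCast]
      rw [h4, hPr, ← Real.rpow_mul (by norm_num : (0:ℝ) ≤ 2),
        ← Real.rpow_mul (by norm_num : (0:ℝ) ≤ 2),
        ← Real.rpow_add two_pos, ← Real.rpow_add two_pos,
        show ((2:ℕ):ℝ) * (s * (k:ℝ)) + ((k:ℝ) * -e + (k:ℝ)) = 0 from by
          rw [hedef]; push_cast; ring,
        Real.rpow_zero]
    have h4nn : (0:ℝ) ≤ (4:ℝ) ^ (s * (k:ℝ)) := Real.rpow_nonneg (by norm_num) _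
    have hPenn : (0:ℝ) ≤ P ^ (-e) := (Real.rpow_pos_of_pos hP0 _).le
    calc ENNReal.ofReal (α P ^ 2 * κ / C ^ 2)
        = ENNReal.ofReal ((4:ℝ) ^ (s * (k:ℝ)) * (α P ^ 2 / C ^ 2 * κ * P ^ (-e) * P)) := by
          congr 1
          rw [show (4:ℝ) ^ (s * (k:ℝ)) * (α P ^ 2 / C ^ 2 * κ * P ^ (-e) * P)
              = α P ^ 2 / C ^ 2 * κ * ((4:ℝ) ^ (s * (k:ℝ)) * (P ^ (-e) * P)) from by ring,
            hexp]
          ring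
      _ = ENNReal.ofReal ((4:ℝ) ^ (s * (k:ℝ))) *
            (ENNReal.ofReal (α P ^ 2 / C ^ 2 * κ * P ^ (-e)) * ENNReal.ofReal P) := by
          rw [← ENNReal.ofReal_mul (by positivity), ← ENNReal.ofReal_mul h4nn]
      _ ≤ ENNReal.ofReal ((4:ℝ) ^ (s * (k:ℝ))) * I k := mul_le_mul_right hIlow _
  -- the intervals Ico (2^k) (2^(k+1)) are disjoint and lie in [1, ∞)
  have hIsum : (∑' k, I k) ≤ T := by
    have hdisjI : Pairwise (Function.onFun Disjoint
        (fun k : ℕ => Set.Ico ((2:ℝ) ^ k) ((2:ℝ) ^ (k + 1)))) := by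
      have key : ∀ j k : ℕ, j < k →
          Disjoint (Set.Ico ((2:ℝ) ^ j) ((2:ℝ) ^ (j + 1)))
            (Set.Ico ((2:ℝ) ^ k) ((2:ℝ) ^ (k + 1))) := by
        intro j k hjk
        rw [Set.disjoint_left]
        intro x hx1 hx2
        have : (2:ℝ) ^ (j + 1) ≤ (2:ℝ) ^ k := pow_le_pow_right₀ one_le_two (by omega)
        have := hx1.2
        have := hx2.1
        linarith
      intro j k hjk
      rcases hjk.lt_or_gt with h | h
      · exact key _ _ h
      · exact (key _ _ h).symm
    have hsub : (⋃ k : ℕ, Set.Ico ((2:ℝ) ^ k) ((2:ℝ) ^ (k + 1))) ⊆ Set.Ici 1 := by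
      intro x hx
      obtain ⟨k, hk⟩ := Set.mem_iUnion.1 hx
      have hP1 : (1:ℝ) ≤ (2:ℝ) ^ k := one_le_pow₀ one_le_two
      exact le_trans hP1 hk.1
    calc (∑' k, I k)
        = ∫⁻ t in ⋃ k : ℕ, Set.Ico ((2:ℝ) ^ k) ((2:ℝ) ^ (k + 1)),
            ENNReal.ofReal (α t ^ 2 / t ^ e) :=
          (lintegral_iUnion (fun _ => measurableSet_Ico) hdisjI _).symm
      _ ≤ T := lintegral_mono_set hsub
  refine ⟨C ^ 4 / κ * (T.toReal + 1), by positivity, fun v hv => ?_⟩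
  have hAT : ENNReal.ofReal (C ^ 4 / κ) * T ≤ ENNReal.ofReal (C ^ 4 / κ * (T.toReal + 1)) := by
    rw [ENNReal.ofReal_mul (by positivity)]
    refine mul_le_mul_right ?_ _
    conv_lhs => rw [← ENNReal.ofReal_toReal hTne]
    exact ENNReal.ofReal_le_ofReal (by linarith)
  -- per-annulus comparison
  have step2 : ∀ k : ℕ,
      (∫⁻ ξ in dyadicAnnulus n k, ENNReal.ofReal (α (smoothNorm ξ) ^ 2 * ‖v ξ‖ ^ 2)) ≤
        ENNReal.ofReal (C ^ 2 * α ((2:ℝ) ^ k) ^ 2) *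
          ∫⁻ ξ in dyadicAnnulus n k, ENNReal.ofReal (‖v ξ‖ ^ 2) := by
    intro k
    have hP1 : (1:ℝ) ≤ (2:ℝ) ^ k := one_le_pow₀ one_le_two
    have hbound : ∀ ξ ∈ dyadicAnnulus n k,
        ENNReal.ofReal (α (smoothNorm ξ) ^ 2 * ‖v ξ‖ ^ 2) ≤
          ENNReal.ofReal (C ^ 2 * α ((2:ℝ) ^ k) ^ 2) * ENNReal.ofReal (‖v ξ‖ ^ 2) := by
      intro ξ hξ
      have hg1 := smoothNorm_one_le ξ
      have hcomp : α (smoothNorm ξ) ≤ C * α ((2:ℝ) ^ k) := by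
        rcases annulus_smoothNorm hξ with ⟨h1, h2⟩ | ⟨h1, h2⟩
        · exact (hC ((2:ℝ) ^ k) (smoothNorm ξ) hP1 h1 h2).1
        · exact (hC (smoothNorm ξ) ((2:ℝ) ^ k) hg1 h1 h2).2
      have hsq : α (smoothNorm ξ) ^ 2 ≤ C ^ 2 * α ((2:ℝ) ^ k) ^ 2 := by
        nlinarith [hpos _ hg1, hpos _ hP1]
      rw [ENNReal.ofReal_mul (by positivity : (0:ℝ) ≤ α (smoothNorm ξ) ^ 2)]
      exact mul_le_mul_left (ENNReal.ofReal_le_ofReal hsq) _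
    calc (∫⁻ ξ in dyadicAnnulus n k, ENNReal.ofReal (α (smoothNorm ξ) ^ 2 * ‖v ξ‖ ^ 2))
        ≤ ∫⁻ ξ in dyadicAnnulus n k,
            ENNReal.ofReal (C ^ 2 * α ((2:ℝ) ^ k) ^ 2) * ENNReal.ofReal (‖v ξ‖ ^ 2) :=
          setLIntegral_mono' (annulus_meas n k) hbound
      _ = ENNReal.ofReal (C ^ 2 * α ((2:ℝ) ^ k) ^ 2) *
            ∫⁻ ξ in dyadicAnnulus n k, ENNReal.ofReal (‖v ξ‖ ^ 2) :=
          lintegral_const_mul' _ _ ENNReal.ofReal_ne_top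
  -- decompose the full integral over the annuli
  have hLHS : (∫⁻ ξ, ENNReal.ofReal (α (smoothNorm ξ) ^ 2 * ‖v ξ‖ ^ 2)) =
      ∑' k : ℕ, ∫⁻ ξ in dyadicAnnulus n k,
        ENNReal.ofReal (α (smoothNorm ξ) ^ 2 * ‖v ξ‖ ^ 2) := by
    rw [← setLIntegral_univ, ← annulus_union n,
      lintegral_iUnion (annulus_meas n) (annulus_disj n)]
  set S : ENNReal := ⨆ k : ℕ, ENNReal.ofReal ((4:ℝ) ^ (s * (k:ℝ))) *
      ∫⁻ ξ in dyadicAnnulus n k, ENNReal.ofReal (‖v ξ‖ ^ 2) with hSdef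
  have step4 : ∀ k : ℕ,
      ENNReal.ofReal (C ^ 2 * α ((2:ℝ) ^ k) ^ 2) *
        (∫⁻ ξ in dyadicAnnulus n k, ENNReal.ofReal (‖v ξ‖ ^ 2)) ≤
      ENNReal.ofReal (C ^ 4 / κ) * S * I k := by
    intro k
    set J : ENNReal := ∫⁻ ξ in dyadicAnnulus n k, ENNReal.ofReal (‖v ξ‖ ^ 2) with hJdef
    have hsplit : C ^ 2 * α ((2:ℝ) ^ k) ^ 2
        = C ^ 4 / κ * (α ((2:ℝ) ^ k) ^ 2 * κ / C ^ 2) := by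
      field_simp
    have hS : ENNReal.ofReal ((4:ℝ) ^ (s * (k:ℝ))) * J ≤ S := by
      rw [hSdef]
      exact le_iSup (fun k : ℕ => ENNReal.ofReal ((4:ℝ) ^ (s * (k:ℝ))) *
        ∫⁻ ξ in dyadicAnnulus n k, ENNReal.ofReal (‖v ξ‖ ^ 2)) k
    calc ENNReal.ofReal (C ^ 2 * α ((2:ℝ) ^ k) ^ 2) * J
        = ENNReal.ofReal (C ^ 4 / κ) *
            ENNReal.ofReal (α ((2:ℝ) ^ k) ^ 2 * κ / C ^ 2) * J := by
          rw [hsplit, ENNReal.ofReal_mul (by positivity)]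
      _ ≤ ENNReal.ofReal (C ^ 4 / κ) *
            (ENNReal.ofReal ((4:ℝ) ^ (s * (k:ℝ))) * I k) * J :=
          mul_le_mul_left (mul_le_mul_right (key3 k) _) _
      _ = ENNReal.ofReal (C ^ 4 / κ) * I k * (ENNReal.ofReal ((4:ℝ) ^ (s * (k:ℝ))) * J) := by
          ring
      _ ≤ ENNReal.ofReal (C ^ 4 / κ) * I k * S := mul_le_mul_right hS _
      _ = ENNReal.ofReal (C ^ 4 / κ) * S * I k := by ring
  calc (∫⁻ ξ, ENNReal.ofReal (α (smoothNorm ξ) ^ 2 * ‖v ξ‖ ^ 2))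
      = ∑' k : ℕ, ∫⁻ ξ in dyadicAnnulus n k,
          ENNReal.ofReal (α (smoothNorm ξ) ^ 2 * ‖v ξ‖ ^ 2) := hLHS
    _ ≤ ∑' k : ℕ, ENNReal.ofReal (C ^ 2 * α ((2:ℝ) ^ k) ^ 2) *
          ∫⁻ ξ in dyadicAnnulus n k, ENNReal.ofReal (‖v ξ‖ ^ 2) :=
        ENNReal.tsum_le_tsum step2
    _ ≤ ∑' k : ℕ, ENNReal.ofReal (C ^ 4 / κ) * S * I k := ENNReal.tsum_le_tsum step4
    _ = ENNReal.ofReal (C ^ 4 / κ) * S * ∑' k, I k := ENNReal.tsum_mul_left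
    _ ≤ ENNReal.ofReal (C ^ 4 / κ) * S * T := mul_le_mul_right hIsum _
    _ = ENNReal.ofReal (C ^ 4 / κ) * T * S := by ring
    _ ≤ ENNReal.ofReal (C ^ 4 / κ * (T.toReal + 1)) * S := mul_le_mul_left hAT _
end

section
/- Let α ∈ OR and let r₀, r₁ ∈ ℝ satisfy r₀ < σ₀(α) and r₁ > σ₁(α). Define ψ : (0,∞) → (0,∞) by ψ(t) := t^{−r₀/(r₁−r₀)}·α(t^{1/(r₁−r₀)}) for t ≥ 1 and ψ(t) := α(1) for 0 < t < 1. Then ψ is pseudoconcave in a neighbourhood of +∞; that is, there exist a number b > 0 and a concave function ψ₁ : (b,∞) → (0,∞) such that both ψ/ψ₁ and ψ₁/ψ are bounded on (b,∞). -/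
lemma or_pow_aux (α : ℝ → ℝ) (hpos : ∀ t, 1 ≤ t → 0 < α t) {b c : ℝ} (hb : 1 < b) (hc : 1 ≤ c)
    (h : ∀ t, 1 ≤ t → ∀ l, 1 ≤ l → l ≤ b →
      c⁻¹ ≤ α (l * t) / α t ∧ α (l * t) / α t ≤ c) :
    ∀ n : ℕ, ∀ t, 1 ≤ t → ∀ l, 1 ≤ l → l ≤ b ^ n →
      (c ^ n)⁻¹ ≤ α (l * t) / α t ∧ α (l * t) / α t ≤ c ^ n := by
  intro n
  induction n with
  | zero =>
    intro t ht l hl hlb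
    have hl1 : l = 1 := le_antisymm (by simpa using hlb) hl
    subst hl1
    simp [div_self (hpos t ht).ne']
  | succ n ih =>
    intro t ht l hl hlb
    have hc0 : (0:ℝ) < c := lt_of_lt_of_le one_pos hc
    have hcn1 : (1:ℝ) ≤ c ^ n := one_le_pow₀ hc
    have hcsucc : c ^ n ≤ c ^ (n+1) := pow_le_pow_right₀ hc (by omega)
    by_cases hcase : l ≤ b ^ n
    · obtain ⟨h1, h2⟩ := ih t ht l hl hcase
      refine ⟨le_trans ?_ h1, h2.trans hcsucc⟩
      exact inv_anti₀ (by positivity) hcsucc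
    · push_neg at hcase
      have hbn : (1:ℝ) ≤ b ^ n := one_le_pow₀ hb.le
      have hbnpos : (0:ℝ) < b ^ n := by positivity
      have hl'1 : 1 ≤ l / b ^ n := (one_le_div hbnpos).2 hcase.le
      have hl'b : l / b ^ n ≤ b := by
        rw [div_le_iff₀ hbnpos]
        calc l ≤ b ^ (n+1) := hlb
          _ = b * b ^ n := by ring
      have htn : 1 ≤ b ^ n * t := by nlinarith
      have key1 := h (b ^ n * t) htn (l / b ^ n) hl'1 hl'b
      have key2 := ih t ht (b ^ n) hbn le_rfl
      have hEq : l / b ^ n * (b ^ n * t) = l * t := by field_simp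
      rw [hEq] at key1
      have h1pos := hpos t ht
      have h2pos := hpos (b ^ n * t) htn
      have h3pos := hpos (l * t) (le_trans ht (le_mul_of_one_le_left (by linarith) hl))
      have hratio : α (l * t) / α t = α (l * t) / α (b ^ n * t) * (α (b ^ n * t) / α t) := by
        field_simp
        rw [mul_comm t, div_self h2pos.ne']
      constructor
      · rw [hratio]
        have e1 : (c ^ (n+1))⁻¹ = c⁻¹ * (c ^ n)⁻¹ := by rw [pow_succ]; ring
        rw [e1]
        exact mul_le_mul key1.1 key2.1 (by positivity)
          (le_of_lt (div_pos h3pos h2pos))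
      · rw [hratio]
        have e1 : c ^ (n+1) = c * c ^ n := by rw [pow_succ]; ring
        rw [e1]
        exact mul_le_mul key1.2 key2.2
          (le_of_lt (div_pos h2pos h1pos)) hc0.le

lemma exists_matuszewska (α : ℝ → ℝ) (hpos : ∀ t, 1 ≤ t → 0 < α t) {b c : ℝ}
    (hb : 1 < b) (hc : 1 ≤ c)
    (h : ∀ t, 1 ≤ t → ∀ l, 1 ≤ l → l ≤ b →
      c⁻¹ ≤ α (l * t) / α t ∧ α (l * t) / α t ≤ c) :
    ∃ p : ℝ, p ∈ upperMSet α ∧ (-p) ∈ lowerMSet α := by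
  set p := Real.log c / Real.log b with hp
  have hc0 : (0:ℝ) < c := lt_of_lt_of_le one_pos hc
  have hb0 : (0:ℝ) < b := lt_trans one_pos hb
  have hlogb : 0 < Real.log b := Real.log_pos hb
  -- key estimate
  have key : ∀ t, 1 ≤ t → ∀ l, 1 ≤ l →
      (c * l ^ p)⁻¹ ≤ α (l * t) / α t ∧ α (l * t) / α t ≤ c * l ^ p := by
    intro t ht l hl
    have hl0 : (0:ℝ) < l := lt_of_lt_of_le one_pos hl
    set n := ⌈Real.logb b l⌉₊ with hn
    have hlogbl : 0 ≤ Real.logb b l := Real.logb_nonneg hb hl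
    have hln : l ≤ b ^ n := by
      have h1 : l = b ^ Real.logb b l := (Real.rpow_logb hb0 (ne_of_gt hb) hl0).symm
      rw [h1, ← Real.rpow_natCast b n]
      exact Real.rpow_le_rpow_of_exponent_le hb.le (Nat.le_ceil _)
    have hcn : (c:ℝ) ^ n ≤ c * l ^ p := by
      rw [← Real.rpow_natCast c n]
      have h1 : (n : ℝ) ≤ Real.logb b l + 1 := le_of_lt (Nat.ceil_lt_add_one hlogbl)
      calc c ^ (n:ℝ) ≤ c ^ (Real.logb b l + 1) := Real.rpow_le_rpow_of_exponent_le hc h1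
        _ = c * l ^ p := by
          rw [Real.rpow_add hc0, Real.rpow_one, mul_comm]
          congr 1
          rw [Real.rpow_def_of_pos hc0, Real.rpow_def_of_pos hl0]
          congr 1
          rw [Real.logb, hp]
          ring
    obtain ⟨h1, h2⟩ := or_pow_aux α hpos hb hc h n t ht l hl hln
    have hcp : (0:ℝ) < c * l ^ p := by positivity
    refine ⟨le_trans ?_ h1, h2.trans hcn⟩
    exact inv_anti₀ (by positivity) hcn
  refine ⟨p, ⟨c, hc0, fun t ht l hl => (key t ht l hl).2⟩,
    ⟨c⁻¹, by positivity, fun t ht l hl => ?_⟩⟩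
  have hl0 : (0:ℝ) < l := lt_of_lt_of_le one_pos hl
  have := (key t ht l hl).1
  calc c⁻¹ * l ^ (-p) = (c * l ^ p)⁻¹ := by
        rw [Real.rpow_neg hl0.le, mul_inv]
    _ ≤ α (l * t) / α t := this

lemma lower_le_upper {α : ℝ → ℝ} (hpos : ∀ t, 1 ≤ t → 0 < α t)
    {s₀ s₁ : ℝ} (h₀ : s₀ ∈ lowerMSet α) (h₁ : s₁ ∈ upperMSet α) : s₀ ≤ s₁ := by
  obtain ⟨c₀, hc₀, hl⟩ := h₀
  obtain ⟨c₁, hc₁, hu⟩ := h₁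
  by_contra hcon
  push_neg at hcon
  have hd : 0 < s₀ - s₁ := by linarith
  have hev := (tendsto_rpow_atTop hd).eventually_gt_atTop (c₁ / c₀)
  obtain ⟨l, hl2, hl1⟩ := (hev.and (Filter.eventually_ge_atTop 1)).exists
  have hl0 : (0:ℝ) < l := lt_of_lt_of_le one_pos hl1
  have h1 := hl 1 le_rfl l hl1
  have h2 := hu 1 le_rfl l hl1
  have hle : c₀ * l ^ s₀ ≤ c₁ * l ^ s₁ := le_trans h1 h2
  have hsplit : l ^ s₀ = l ^ s₁ * l ^ (s₀ - s₁) := by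
    rw [← Real.rpow_add hl0]; ring_nf
  rw [hsplit] at hle
  have hls₁ : 0 < l ^ s₁ := Real.rpow_pos_of_pos hl0 _
  rw [show c₀ * (l ^ s₁ * l ^ (s₀ - s₁)) = c₀ * l ^ (s₀ - s₁) * l ^ s₁ from by ring] at hle
  have h4 : c₀ * l ^ (s₀ - s₁) ≤ c₁ := le_of_mul_le_mul_right hle hls₁
  have h6 : l ^ (s₀ - s₁) ≤ c₁ / c₀ := by
    rw [le_div_iff₀ hc₀, mul_comm]; exact h4
  linarith

lemma pow_shuffle {t s ρ r₀ s₁ : ℝ} (hρ : 0 < ρ) (hs : 0 < s) (ht : 0 < t) :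
    t ^ (-r₀/ρ) * (t/s) ^ (1/ρ * s₁) = (t/s) ^ ((s₁ - r₀)/ρ) * s ^ (-r₀/ρ) := by
  have hr0 : 0 < t/s := div_pos ht hs
  have h1 : ((s₁ - r₀)/ρ) = 1/ρ * s₁ + (-r₀/ρ) := by field_simp; ring
  rw [h1, Real.rpow_add hr0, mul_assoc, ← Real.mul_rpow hr0.le hs.le,
    div_mul_cancel₀ _ hs.ne']
  ring

lemma div_rpow_mul_neg {u s e : ℝ} (hu : 0 < u) (hs : 0 < s) :
    (u/s) ^ e * u ^ (-e) = s ^ (-e) := by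
  have h1 : (0:ℝ) < u ^ e := Real.rpow_pos_of_pos hu _
  have h2 : (0:ℝ) < s ^ e := Real.rpow_pos_of_pos hs _
  rw [Real.div_rpow hu.le hs.le, Real.rpow_neg hu.le, Real.rpow_neg hs.le]
  field_simp

set_option maxHeartbeats 1000000 in
/-- If `α ∈ OR`, `r₀ < σ₀(α)`, `r₁ > σ₁(α)`, and
`ψ(t) = t^{−r₀/(r₁−r₀)}·α(t^{1/(r₁−r₀)})` for `t ≥ 1`, `ψ(t) = α(1)` for `0 < t < 1`,
then `ψ` is pseudoconcave in a neighbourhood of `+∞`. -/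
theorem stmt_15 (α : ℝ → ℝ) (hα : IsOR α) (r₀ r₁ : ℝ)
    (h0 : r₀ < sigma0 α) (h1 : sigma1 α < r₁)
    (ψ : ℝ → ℝ)
    (hψ : ∀ t : ℝ, 0 < t →
      ψ t = if 1 ≤ t then t ^ (-r₀ / (r₁ - r₀)) * α (t ^ (1 / (r₁ - r₀))) else α 1) :
    ∃ b : ℝ, 0 < b ∧ ∃ ψ₁ : ℝ → ℝ,
      ConcaveOn ℝ (Set.Ioi b) ψ₁ ∧ (∀ t, b < t → 0 < ψ₁ t) ∧
      (∃ M : ℝ, ∀ t, b < t → ψ t / ψ₁ t ≤ M) ∧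
      (∃ M : ℝ, ∀ t, b < t → ψ₁ t / ψ t ≤ M) := by
  obtain ⟨hmeas, hpos, b0, hb0, c, hc, hOR⟩ := hα
  obtain ⟨p, hpU, hpL⟩ := exists_matuszewska α hpos hb0 hc hOR
  -- extract exponents
  have hLbdd : BddAbove (lowerMSet α) := ⟨p, fun s hs => lower_le_upper hpos hs hpU⟩
  have hUbdd : BddBelow (upperMSet α) := ⟨-p, fun s hs => lower_le_upper hpos hpL hs⟩
  obtain ⟨s₀, hs₀mem, hs₀gt⟩ := (lt_csSup_iff hLbdd ⟨-p, hpL⟩).1 h0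
  obtain ⟨s₁, hs₁mem, hs₁lt⟩ := (csInf_lt_iff hUbdd ⟨p, hpU⟩).1 h1
  have hss : s₀ ≤ s₁ := lower_le_upper hpos hs₀mem hs₁mem
  obtain ⟨c₀, hc₀, hB₀⟩ := hs₀mem
  obtain ⟨c₁, hc₁, hB₁⟩ := hs₁mem
  set ρ := r₁ - r₀ with hρdef
  have hρ : 0 < ρ := by dsimp [ρ]; linarith
  set e := (s₁ - r₀)/ρ with hedef
  set a := (s₀ - r₀)/ρ with hadef
  have ha : 0 < a := div_pos (by linarith) hρ
  have he : 0 < e := div_pos (by linarith) hρ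
  have he1 : e < 1 := by
    rw [hedef, div_lt_one hρ]; dsimp [ρ]; linarith
  have hψ' : ∀ t, 1 ≤ t → ψ t = t ^ (-r₀/ρ) * α (t ^ (1/ρ)) := by
    intro t ht
    rw [hψ t (by linarith), if_pos ht]
  have hrpow1 : ∀ t : ℝ, 1 ≤ t → 1 ≤ t ^ (1/ρ) := by
    intro t ht
    exact Real.one_le_rpow ht (by positivity)
  have hψpos : ∀ t, 1 ≤ t → 0 < ψ t := by
    intro t ht
    rw [hψ' t ht]
    exact mul_pos (Real.rpow_pos_of_pos (by linarith) _) (hpos _ (hrpow1 t ht))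
  -- comparison estimates
  have hA : ∀ s t : ℝ, 1 ≤ s → s ≤ t → ψ t ≤ c₁ * (t/s) ^ e * ψ s := by
    intro s t hs hst
    have hs0 : (0:ℝ) < s := by linarith
    have ht1 : 1 ≤ t := hs.trans hst
    have ht0 : (0:ℝ) < t := by linarith
    have hr : (1:ℝ) ≤ t/s := (one_le_div hs0).2 hst
    have hr0 : (0:ℝ) < t/s := by linarith
    have hu1 : 1 ≤ s ^ (1/ρ) := hrpow1 s hs
    have hl1 : 1 ≤ (t/s) ^ (1/ρ) := Real.one_le_rpow hr (by positivity)
    have hkey := hB₁ (s ^ (1/ρ)) hu1 ((t/s) ^ (1/ρ)) hl1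
    have hmul : (t/s) ^ (1/ρ) * s ^ (1/ρ) = t ^ (1/ρ) := by
      rw [Real.div_rpow ht0.le hs0.le, div_mul_cancel₀]
      exact (Real.rpow_pos_of_pos hs0 _).ne'
    rw [hmul] at hkey
    have hαs := hpos _ hu1
    rw [div_le_iff₀ hαs] at hkey
    rw [hψ' s hs, hψ' t ht1]
    have hpowe : ((t/s) ^ ((1:ℝ)/ρ)) ^ s₁ = (t/s) ^ ((1:ℝ)/ρ * s₁) :=
      (Real.rpow_mul hr0.le _ _).symm
    calc t ^ (-r₀/ρ) * α (t ^ (1/ρ))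
        ≤ t ^ (-r₀/ρ) * (c₁ * ((t/s) ^ ((1:ℝ)/ρ)) ^ s₁ * α (s ^ (1/ρ))) :=
          mul_le_mul_of_nonneg_left hkey (Real.rpow_nonneg ht0.le _)
      _ = c₁ * (t ^ (-r₀/ρ) * (t/s) ^ ((1:ℝ)/ρ * s₁)) * α (s ^ (1/ρ)) := by
          rw [hpowe]; ring
      _ = c₁ * (t/s) ^ e * (s ^ (-r₀/ρ) * α (s ^ (1/ρ))) := by
          rw [pow_shuffle hρ hs0 ht0, hedef]; ring
  have hB : ∀ s t : ℝ, 1 ≤ s → s ≤ t → c₀ * (t/s) ^ a * ψ s ≤ ψ t := by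
    intro s t hs hst
    have hs0 : (0:ℝ) < s := by linarith
    have ht1 : 1 ≤ t := hs.trans hst
    have ht0 : (0:ℝ) < t := by linarith
    have hr : (1:ℝ) ≤ t/s := (one_le_div hs0).2 hst
    have hr0 : (0:ℝ) < t/s := by linarith
    have hu1 : 1 ≤ s ^ (1/ρ) := hrpow1 s hs
    have hl1 : 1 ≤ (t/s) ^ (1/ρ) := Real.one_le_rpow hr (by positivity)
    have hkey := hB₀ (s ^ (1/ρ)) hu1 ((t/s) ^ (1/ρ)) hl1
    have hmul : (t/s) ^ (1/ρ) * s ^ (1/ρ) = t ^ (1/ρ) := by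
      rw [Real.div_rpow ht0.le hs0.le, div_mul_cancel₀]
      exact (Real.rpow_pos_of_pos hs0 _).ne'
    rw [hmul] at hkey
    have hαs := hpos _ hu1
    rw [le_div_iff₀ hαs] at hkey
    rw [hψ' s hs, hψ' t ht1]
    have hpowe : ((t/s) ^ ((1:ℝ)/ρ)) ^ s₀ = (t/s) ^ ((1:ℝ)/ρ * s₀) :=
      (Real.rpow_mul hr0.le _ _).symm
    calc c₀ * (t/s) ^ a * (s ^ (-r₀/ρ) * α (s ^ (1/ρ)))
        = c₀ * (t ^ (-r₀/ρ) * (t/s) ^ ((1:ℝ)/ρ * s₀)) * α (s ^ (1/ρ)) := by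
          rw [pow_shuffle hρ hs0 ht0, hadef]; ring
      _ = t ^ (-r₀/ρ) * (c₀ * ((t/s) ^ ((1:ℝ)/ρ)) ^ s₀ * α (s ^ (1/ρ))) := by
          rw [hpowe]; ring
      _ ≤ t ^ (-r₀/ρ) * α (t ^ (1/ρ)) :=
          mul_le_mul_of_nonneg_left hkey (Real.rpow_nonneg ht0.le _)
  -- the auxiliary antitone function g
  set S : ℝ → Set ℝ := fun s => (fun u => ψ u * u ^ (-e)) '' Set.Ici s with hSdef
  have hSne : ∀ s : ℝ, (S s).Nonempty := fun s => ⟨ψ s * s ^ (-e), s, Set.mem_Ici.2 le_rfl, rfl⟩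
  have hSbdd : ∀ s : ℝ, 1 ≤ s → c₁ * ψ s * s ^ (-e) ∈ upperBounds (S s) := by
    intro s hs
    rintro x ⟨u, hu, rfl⟩
    have hu1 : (1:ℝ) ≤ u := hs.trans hu
    have hu0 : (0:ℝ) < u := by linarith
    have hs0 : (0:ℝ) < s := by linarith
    have h2 := hA s u hs hu
    calc ψ u * u ^ (-e) ≤ (c₁ * (u/s) ^ e * ψ s) * u ^ (-e) :=
          mul_le_mul_of_nonneg_right h2 (Real.rpow_nonneg hu0.le _)
      _ = c₁ * ψ s * ((u/s) ^ e * u ^ (-e)) := by ring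
      _ = c₁ * ψ s * s ^ (-e) := by rw [div_rpow_mul_neg hu0 hs0]
  have hSbdd' : ∀ s : ℝ, 1 ≤ s → BddAbove (S s) := fun s hs => ⟨_, hSbdd s hs⟩
  set h : ℝ → ℝ := fun s => sSup (S s) with hhdef
  have hhl : ∀ s : ℝ, 1 ≤ s → ψ s * s ^ (-e) ≤ h s := by
    intro s hs
    exact le_csSup (hSbdd' s hs) ⟨s, Set.mem_Ici.2 le_rfl, rfl⟩
  have hhu : ∀ s : ℝ, 1 ≤ s → h s ≤ c₁ * ψ s * s ^ (-e) := by
    intro s hs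
    exact csSup_le (hSne s) (hSbdd s hs)
  have hhanti : ∀ s s' : ℝ, 1 ≤ s → s ≤ s' → h s' ≤ h s := by
    intro s s' hs hss'
    apply csSup_le_csSup (hSbdd' s hs) (hSne s')
    exact Set.image_mono (Set.Ici_subset_Ici.2 hss')
  set g : ℝ → ℝ := fun s => s ^ (e-1) * h s with hgdef
  have hganti : AntitoneOn g (Set.Ici 1) := by
    intro s hs s' hs' hss'
    simp only [Set.mem_Ici] at hs hs'
    have hs0 : (0:ℝ) < s := by linarith
    have hh0 : 0 < h s' := lt_of_lt_of_le
      (mul_pos (hψpos s' hs') (Real.rpow_pos_of_pos (by linarith) _)) (hhl s' hs')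
    apply mul_le_mul (Real.rpow_le_rpow_of_nonpos hs0 hss' (by linarith))
      (hhanti s s' hs hss') hh0.le (Real.rpow_nonneg hs0.le _)
  have hgl : ∀ s : ℝ, 1 ≤ s → ψ s * s ^ (-1:ℝ) ≤ g s := by
    intro s hs
    have hs0 : (0:ℝ) < s := by linarith
    have := mul_le_mul_of_nonneg_left (hhl s hs) (Real.rpow_nonneg hs0.le (e-1))
    calc ψ s * s ^ (-1:ℝ) = s ^ (e-1) * (ψ s * s ^ (-e)) := by
          rw [show (-1:ℝ) = (e-1) + (-e) from by ring, Real.rpow_add hs0]; ring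
      _ ≤ g s := this
  have hgu : ∀ s : ℝ, 1 ≤ s → g s ≤ c₁ * ψ s * s ^ (-1:ℝ) := by
    intro s hs
    have hs0 : (0:ℝ) < s := by linarith
    have := mul_le_mul_of_nonneg_left (hhu s hs) (Real.rpow_nonneg hs0.le (e-1))
    calc g s ≤ s ^ (e-1) * (c₁ * ψ s * s ^ (-e)) := this
      _ = c₁ * ψ s * s ^ (-1:ℝ) := by
          rw [show (-1:ℝ) = (e-1) + (-e) from by ring, Real.rpow_add hs0]; ring
  have hgpos : ∀ s : ℝ, 1 ≤ s → 0 < g s := by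
    intro s hs
    have hs0 : (0:ℝ) < s := by linarith
    exact lt_of_lt_of_le (mul_pos (hψpos s hs) (Real.rpow_pos_of_pos hs0 _)) (hgl s hs)
  -- integrability
  have gInt : ∀ x y : ℝ, 1 ≤ x → 1 ≤ y → IntervalIntegrable g MeasureTheory.volume x y := by
    intro x y hx hy
    apply AntitoneOn.intervalIntegrable
    apply hganti.mono
    intro u hu
    have h1 : min x y ≤ u := hu.1
    have : (1:ℝ) ≤ min x y := le_min hx hy
    exact le_trans this h1
  set ψ₁ : ℝ → ℝ := fun t => 1 + ∫ u in (1:ℝ)..t, g u with hψ₁def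
  -- basic integral bounds
  have hIl : ∀ t : ℝ, 1 ≤ t → (t - 1) * g t ≤ ∫ u in (1:ℝ)..t, g u := by
    intro t ht
    have h1 : ∫ u in (1:ℝ)..t, g t = (t - 1) * g t := by
      rw [intervalIntegral.integral_const, smul_eq_mul]
    rw [← h1]
    apply intervalIntegral.integral_mono_on ht (intervalIntegrable_const) (gInt 1 t le_rfl ht)
    intro u hu
    exact hganti (Set.mem_Ici.2 hu.1) (Set.mem_Ici.2 ht) hu.2
  refine ⟨1, one_pos, ψ₁, ?_, ?_, ?_, ?_⟩
  · -- concavity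
    apply concaveOn_of_slope_anti_adjacent (convex_Ioi 1)
    intro x y z hx hz hxy hyz
    simp only [Set.mem_Ioi] at hx hz
    have hy : (1:ℝ) < y := lt_trans hx hxy
    have key : ∀ u v : ℝ, 1 ≤ u → u ≤ v → ψ₁ v - ψ₁ u = ∫ w in u..v, g w := by
      intro u v hu huv
      have h2 : ψ₁ v - ψ₁ u = (∫ w in (1:ℝ)..v, g w) - ∫ w in (1:ℝ)..u, g w := by
        simp only [hψ₁def]; ring
      rw [h2]
      exact intervalIntegral.integral_interval_sub_left
        (gInt 1 v le_rfl (hu.trans huv)) (gInt 1 u le_rfl hu)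
    have hub : (∫ w in y..z, g w) ≤ (z - y) * g y := by
      have h1 : (∫ w in y..z, (fun _ => g y) w) = (z - y) * g y := by
        rw [intervalIntegral.integral_const, smul_eq_mul]
      rw [← h1]
      apply intervalIntegral.integral_mono_on hyz.le
        (gInt y z hy.le (hy.le.trans hyz.le)) intervalIntegrable_const
      intro u hu
      exact hganti (Set.mem_Ici.2 hy.le) (Set.mem_Ici.2 (hy.le.trans hu.1)) hu.1
    have hlb : (y - x) * g y ≤ ∫ w in x..y, g w := by
      have h1 : (∫ w in x..y, (fun _ => g y) w) = (y - x) * g y := by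
        rw [intervalIntegral.integral_const, smul_eq_mul]
      rw [← h1]
      apply intervalIntegral.integral_mono_on hxy.le intervalIntegrable_const
        (gInt x y hx.le hy.le)
      intro u hu
      exact hganti (Set.mem_Ici.2 (hx.le.trans hu.1)) (Set.mem_Ici.2 hy.le) hu.2
    rw [key y z hy.le hyz.le, key x y hx.le hxy.le,
      div_le_div_iff₀ (by linarith) (by linarith)]
    calc (∫ w in y..z, g w) * (y - x) ≤ (z - y) * g y * (y - x) :=
          mul_le_mul_of_nonneg_right hub (by linarith)
      _ = ((y - x) * g y) * (z - y) := by ring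
      _ ≤ (∫ w in x..y, g w) * (z - y) := mul_le_mul_of_nonneg_right hlb (by linarith)
  · -- positivity
    intro t ht
    have h2 : 0 ≤ ∫ u in (1:ℝ)..t, g u :=
      intervalIntegral.integral_nonneg ht.le (fun u hu => (hgpos u hu.1).le)
    show (0:ℝ) < 1 + ∫ u in (1:ℝ)..t, g u
    linarith
  · -- ψ/ψ₁ bounded
    refine ⟨max (c₁ * 2 ^ e * ψ 1) 2, ?_⟩
    intro t ht
    have ht1 : (1:ℝ) ≤ t := ht.le
    have ht0 : (0:ℝ) < t := by linarith
    have hInn : 0 ≤ ∫ u in (1:ℝ)..t, g u :=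
      intervalIntegral.integral_nonneg ht1 (fun u hu => (hgpos u hu.1).le)
    have hψ₁1 : 1 ≤ ψ₁ t := by
      show (1:ℝ) ≤ 1 + ∫ u in (1:ℝ)..t, g u; linarith
    have hψ₁pos : 0 < ψ₁ t := by linarith
    by_cases hcase : t ≤ 2
    · have h3 : (t/1) ^ e ≤ 2 ^ e := by
        rw [div_one]
        exact Real.rpow_le_rpow ht0.le hcase he.le
      have h2 : ψ t ≤ c₁ * 2 ^ e * ψ 1 := by
        calc ψ t ≤ c₁ * (t/1) ^ e * ψ 1 := hA 1 t le_rfl ht1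
          _ ≤ c₁ * 2 ^ e * ψ 1 :=
            mul_le_mul_of_nonneg_right (mul_le_mul_of_nonneg_left h3 hc₁.le)
              (hψpos 1 le_rfl).le
      calc ψ t / ψ₁ t ≤ ψ t := div_le_self (hψpos t ht1).le hψ₁1
        _ ≤ c₁ * 2 ^ e * ψ 1 := h2
        _ ≤ max (c₁ * 2 ^ e * ψ 1) 2 := le_max_left _ _
    · push_neg at hcase
      have hrt : t ^ (-1:ℝ) = t⁻¹ := Real.rpow_neg_one t
      have h3 : (t - 1) * (ψ t * t⁻¹) ≤ ψ₁ t := by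
        have h4 : (t - 1) * (ψ t * t⁻¹) ≤ (t - 1) * g t := by
          apply mul_le_mul_of_nonneg_left _ (by linarith)
          rw [← hrt]; exact hgl t ht1
        have h5 := hIl t ht1
        show (t - 1) * (ψ t * t⁻¹) ≤ 1 + ∫ u in (1:ℝ)..t, g u
        linarith
      have hinv : t⁻¹ ≤ 2⁻¹ := inv_anti₀ (by norm_num) hcase.le
      have h6 : (1:ℝ) ≤ 2 - 2 * t⁻¹ := by
        have : (2:ℝ) * t⁻¹ ≤ 2 * 2⁻¹ := by linarith
        norm_num at this
        linarith
      have h7 : 2 * (t - 1) * t⁻¹ = 2 - 2 * t⁻¹ := by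
        field_simp
      have h5 : ψ t ≤ 2 * ((t - 1) * (ψ t * t⁻¹)) := by
        have h8 : 2 * ((t - 1) * (ψ t * t⁻¹)) = ψ t * (2 * (t - 1) * t⁻¹) := by ring
        rw [h8, h7]
        nlinarith [hψpos t ht1]
      have h9 : ψ t ≤ 2 * ψ₁ t :=
        h5.trans ((mul_le_mul_of_nonneg_left h3 (by norm_num : (0:ℝ) ≤ 2)))
      calc ψ t / ψ₁ t ≤ 2 := by
            rw [div_le_iff₀ hψ₁pos]; linarith
        _ ≤ max (c₁ * 2 ^ e * ψ 1) 2 := le_max_right _ _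
  · -- ψ₁/ψ bounded
    refine ⟨(c₀ * ψ 1)⁻¹ + c₁ / (c₀ * a), ?_⟩
    intro t ht
    have ht1 : (1:ℝ) ≤ t := ht.le
    have ht0 : (0:ℝ) < t := by linarith
    have hψt := hψpos t ht1
    rw [div_le_iff₀ hψt]
    have hta : t ^ (-a) * t ^ a = 1 := by
      rw [← Real.rpow_add ht0]; norm_num
    have hptw : ∀ u ∈ Set.Icc (1:ℝ) t, g u ≤ (c₁ * c₀⁻¹ * ψ t * t ^ (-a)) * u ^ (a-1) := by
      intro u hu
      obtain ⟨hu1, hut⟩ := hu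
      have hu0 : (0:ℝ) < u := by linarith
      have hq : (0:ℝ) < (t/u) ^ a := Real.rpow_pos_of_pos (div_pos ht0 hu0) _
      have h4 : ψ u * (c₀ * (t/u) ^ a) ≤ ψ t := by
        rw [show ψ u * (c₀ * (t/u) ^ a) = c₀ * (t/u) ^ a * ψ u from by ring]
        exact hB u t hu1 hut
      have h5 : ψ u ≤ ψ t / (c₀ * (t/u) ^ a) := (le_div_iff₀ (mul_pos hc₀ hq)).2 h4
      have h6 : ((t/u) ^ a)⁻¹ = (u/t) ^ a := by
        rw [← Real.inv_rpow (by positivity), inv_div]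
      have hkey : c₀⁻¹ * (u/t) ^ a * ψ t = ψ t / (c₀ * (t/u) ^ a) := by
        rw [← h6]
        generalize (t/u) ^ a = Y
        rw [div_eq_mul_inv, mul_inv]
        ring
      have h5' : ψ u ≤ c₀⁻¹ * (u/t) ^ a * ψ t := by rw [hkey]; exact h5
      have h7 : (u/t) ^ a * u ^ (-1:ℝ) = t ^ (-a) * u ^ (a-1) := by
        rw [Real.div_rpow hu0.le ht0.le, Real.rpow_neg ht0.le,
          show (a-1:ℝ) = a + (-1) from by ring, Real.rpow_add hu0]
        ring
      calc g u ≤ c₁ * ψ u * u ^ (-1:ℝ) := hgu u hu1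
        _ ≤ c₁ * (c₀⁻¹ * (u/t) ^ a * ψ t) * u ^ (-1:ℝ) := by
            apply mul_le_mul_of_nonneg_right _ (Real.rpow_nonneg hu0.le _)
            exact mul_le_mul_of_nonneg_left h5' hc₁.le
        _ = c₁ * c₀⁻¹ * ψ t * ((u/t) ^ a * u ^ (-1:ℝ)) := by ring
        _ = (c₁ * c₀⁻¹ * ψ t * t ^ (-a)) * u ^ (a-1) := by rw [h7]; ring
    have hint2 : IntervalIntegrable (fun u : ℝ => (c₁ * c₀⁻¹ * ψ t * t ^ (-a)) * u ^ (a-1))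
        MeasureTheory.volume 1 t :=
      (intervalIntegral.intervalIntegrable_rpow' (by linarith)).const_mul _
    have h2 : (∫ u in (1:ℝ)..t, g u) ≤
        ∫ u in (1:ℝ)..t, (c₁ * c₀⁻¹ * ψ t * t ^ (-a)) * u ^ (a-1) :=
      intervalIntegral.integral_mono_on ht1 (gInt 1 t le_rfl ht1) hint2 hptw
    have h3 : (∫ u in (1:ℝ)..t, (c₁ * c₀⁻¹ * ψ t * t ^ (-a)) * u ^ (a-1))
        = (c₁ * c₀⁻¹ * ψ t * t ^ (-a)) * ((t ^ a - 1)/a) := by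
      rw [intervalIntegral.integral_const_mul, integral_rpow (Or.inl (by linarith)),
        show a - 1 + 1 = a from by ring, Real.one_rpow]
    have h8 : (c₁ * c₀⁻¹ * ψ t * t ^ (-a)) * ((t ^ a - 1)/a)
        = c₁ / (c₀ * a) * ψ t * (t ^ (-a) * t ^ a - t ^ (-a)) := by
      generalize t ^ (-a) = X
      generalize t ^ a = Y
      rw [div_eq_mul_inv, div_eq_mul_inv, mul_inv]
      ring
    have h9 : t ^ (-a) * t ^ a - t ^ (-a) ≤ 1 := by
      rw [hta]
      have := Real.rpow_nonneg ht0.le (-a)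
      linarith
    have hI : (∫ u in (1:ℝ)..t, g u) ≤ c₁ / (c₀ * a) * ψ t := by
      have h10 : c₁ / (c₀ * a) * ψ t * (t ^ (-a) * t ^ a - t ^ (-a))
          ≤ c₁ / (c₀ * a) * ψ t * 1 := by
        apply mul_le_mul_of_nonneg_left h9
        have : (0:ℝ) < c₁ / (c₀ * a) := by positivity
        positivity
      rw [mul_one] at h10
      calc (∫ u in (1:ℝ)..t, g u) ≤ _ := h2
        _ = _ := h3
        _ = _ := h8
        _ ≤ c₁ / (c₀ * a) * ψ t := h10
    have hone : (1:ℝ) ≤ (c₀ * ψ 1)⁻¹ * ψ t := by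
      have hd1 : 1 ≤ (t/1) ^ a := by
        rw [div_one]; exact Real.one_le_rpow ht1 ha.le
      have h8' : c₀ * ψ 1 ≤ ψ t := by
        have h9' := hB 1 t le_rfl ht1
        have h10' : c₀ * 1 * ψ 1 ≤ c₀ * (t/1) ^ a * ψ 1 :=
          mul_le_mul_of_nonneg_right (mul_le_mul_of_nonneg_left hd1 hc₀.le)
            (hψpos 1 le_rfl).le
        rw [mul_one] at h10'
        linarith
      rw [← div_eq_inv_mul]
      rw [le_div_iff₀ (mul_pos hc₀ (hψpos 1 le_rfl))]
      linarith
    show 1 + (∫ u in (1:ℝ)..t, g u) ≤ ((c₀ * ψ 1)⁻¹ + c₁ / (c₀ * a)) * ψ t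
    rw [add_mul]
    exact add_le_add hone hI
end
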